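/- arXiv:1301.2195 — 7 statements merged into one kernel-verified Lean document; each statement's English description precedes it below -/
import Mathlib

section
/- Every subgraph G of the hypercube Q_n with average degree d contains a geodesic path of length at least d (a path in which no two edges have the same coordinate direction). -/
open SimpleGraph Finset
open scoped symmDiff

/-- The hypercube `Q_n` on vertex set `{0,1}^n`: two vertices are adjacent iff they
differ in exactly one coordinate. -/
def Q (n : ℕ) : SimpleGraph (Fin n → Bool) where
  Adj x y := hammingDist x y = 1
  symm := ⟨fun x y h => (hammingDist_comm y x).trans h⟩
  loopless := ⟨fun x h => by simp at h⟩

/-- The coordinate direction of a step from `x` to `y` (for an edge of `Q n`, the unique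
coordinate where they differ), as a natural number. -/
def dir {n : ℕ} (x y : Fin n → Bool) : ℕ :=
  (Finset.univ.filter fun i => x i ≠ y i).sup fun i => (i : ℕ)

/-- The list of coordinate directions of the edges of a walk in `Q n`. -/
def dirs {n : ℕ} {u v : Fin n → Bool} (p : (Q n).Walk u v) : List ℕ :=
  p.darts.map fun d => dir d.fst d.snd

/-- A geodesic in `Q n`: a path no two of whose edges lie in the same coordinate
direction. -/
def IsGeodesic {n : ℕ} {u v : Fin n → Bool} (p : (Q n).Walk u v) : Prop :=
  p.IsPath ∧ (dirs p).Nodup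

/-- An increasing geodesic in `Q n`: a path whose successive edge directions strictly
increase. -/
def IsIncGeodesic {n : ℕ} {u v : Fin n → Bool} (p : (Q n).Walk u v) : Prop :=
  p.IsPath ∧ (dirs p).Chain' (· < ·)

/-- `maxInc G x` is the maximum length of an increasing geodesic contained in the
subgraph `G` of `Q n` and ending at the vertex `x`. -/
noncomputable def maxInc {n : ℕ} (G : (Q n).Subgraph) (x : Fin n → Bool) : ℕ :=
  sSup {l | ∃ u, ∃ p : (Q n).Walk u x, p.toSubgraph ≤ G ∧ IsIncGeodesic p ∧ p.length = l}

section Aux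
variable {n : ℕ}

abbrev Vn (n : ℕ) := Fin n → Bool

lemma dir_comm (x y : Vn n) : dir x y = dir y x := by
  unfold dir
  congr 1
  apply Finset.filter_congr
  intro i _
  simp [ne_comm]

lemma adj_elim {x y : Vn n} (h : (Q n).Adj x y) :
    ∃ i : Fin n, x i ≠ y i ∧ (∀ j, j ≠ i → x j = y j) ∧ dir x y = (i : ℕ) := by
  have h' : (Finset.univ.filter fun i => x i ≠ y i).card = 1 := by
    have h0 : hammingDist x y = 1 := h
    exact h0
  obtain ⟨i, hi⟩ := Finset.card_eq_one.mp h'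
  refine ⟨i, ?_, ?_, ?_⟩
  · have : i ∈ Finset.univ.filter fun i => x i ≠ y i := by rw [hi]; simp
    simpa using this
  · intro j hj
    by_contra hc
    have : j ∈ Finset.univ.filter fun i => x i ≠ y i := by simp [hc]
    rw [hi, Finset.mem_singleton] at this
    exact hj this
  · unfold dir; rw [hi]; simp

lemma adj_unique {x y z : Vn n} (h1 : (Q n).Adj x y) (h2 : (Q n).Adj x z)
    (hd : dir x y = dir x z) : y = z := by
  obtain ⟨i, hi1, hi2, hi3⟩ := adj_elim h1
  obtain ⟨k, hk1, hk2, hk3⟩ := adj_elim h2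
  rw [hi3, hk3] at hd
  have hik : i = k := Fin.ext (by exact_mod_cast hd)
  subst hik
  funext j
  by_cases hj : j = i
  · subst hj
    revert hi1 hk1; cases x j <;> cases y j <;> cases z j <;> simp
  · exact (hi2 j hj).symm.trans (hk2 j hj)

lemma dirs_cons {u w v : Vn n} (h : (Q n).Adj u w) (q : (Q n).Walk w v) :
    dirs (SimpleGraph.Walk.cons h q) = dir u w :: dirs q := rfl

lemma eq_of_not_mem_dirs {u v : Vn n} (p : (Q n).Walk u v) (j : Fin n)
    (hj : (j : ℕ) ∉ dirs p) : u j = v j := by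
  induction p with
  | nil => rfl
  | cons h q ih =>
    rw [dirs_cons, List.mem_cons] at hj
    push_neg at hj
    obtain ⟨i, hi1, hi2, hi3⟩ := adj_elim h
    have hji : j ≠ i := by
      intro he; exact hj.1 (by rw [he, hi3])
    exact (hi2 j hji).trans (ih hj.2)

lemma ne_of_nodup_cons {u w v : Vn n} (h : (Q n).Adj u w) (q : (Q n).Walk w v)
    (hn : (dirs (SimpleGraph.Walk.cons h q)).Nodup) : u ≠ v := by
  obtain ⟨i, hi1, _, hi3⟩ := adj_elim h
  rw [dirs_cons, List.nodup_cons] at hn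
  have hnotin : (i : ℕ) ∉ dirs q := hi3 ▸ hn.1
  have hwv := eq_of_not_mem_dirs q i hnotin
  intro he
  subst he
  exact hi1 (hwv.symm)

lemma dirs_takeUntil_sublist [DecidableEq (Vn n)] {u v w : Vn n} (q : (Q n).Walk u v)
    (h : w ∈ q.support) : (dirs (q.takeUntil w h)).Sublist (dirs q) := by
  have hda : ∀ (a b c : Vn n) (p1 : (Q n).Walk a b) (p2 : (Q n).Walk b c),
      dirs (p1.append p2) = dirs p1 ++ dirs p2 := by
    intro a b c p1 p2
    simp [dirs, SimpleGraph.Walk.darts_append]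
  have h2 : dirs q = dirs (q.takeUntil w h) ++ dirs (q.dropUntil w h) := by
    conv_lhs => rw [← q.take_spec h]
    rw [hda]
  rw [h2]
  exact List.sublist_append_left _ _

lemma isPath_of_dirs_nodup {u v : Vn n} (p : (Q n).Walk u v) (hn : (dirs p).Nodup) :
    p.IsPath := by
  classical
  induction p with
  | nil => exact SimpleGraph.Walk.IsPath.nil
  | cons h q ih =>
    rw [dirs_cons, List.nodup_cons] at hn
    refine (SimpleGraph.Walk.cons_isPath_iff h q).mpr ⟨ih hn.2, ?_⟩
    intro hu
    have hsub := dirs_takeUntil_sublist q hu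
    have hn2 : (dirs (SimpleGraph.Walk.cons h (q.takeUntil _ hu))).Nodup := by
      rw [dirs_cons, List.nodup_cons]
      exact ⟨fun hm => hn.1 (hsub.subset hm), List.Nodup.sublist hsub hn.2⟩
    exact ne_of_nodup_cons h _ hn2 rfl

lemma dir_lt {x y : Vn n} (h : (Q n).Adj x y) : dir x y < n := by
  obtain ⟨i, _, _, h3⟩ := adj_elim h
  rw [h3]; exact i.isLt

lemma length_le_of_dirs_nodup {u v : Vn n} (p : (Q n).Walk u v) (hn : (dirs p).Nodup) :
    p.length ≤ n := by
  classical
  have hlen : (dirs p).length = p.length := by simp [dirs]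
  rw [← hlen]
  have hsub : (dirs p).toFinset ⊆ Finset.range n := by
    intro a ha
    rw [List.mem_toFinset] at ha
    rw [Finset.mem_range]
    obtain ⟨d, _, rfl⟩ := List.mem_map.mp ha
    exact dir_lt d.adj
  calc (dirs p).length = (dirs p).toFinset.card := (List.toFinset_card_of_nodup hn).symm
    _ ≤ (Finset.range n).card := Finset.card_le_card hsub
    _ = n := Finset.card_range n

noncomputable def dirE (n : ℕ) : Sym2 (Vn n) → ℕ :=
  Sym2.lift ⟨dir, fun x y => dir_comm x y⟩

noncomputable def Kc (n : ℕ) : ℕ := Fintype.card (Sym2 (Vn n))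

noncomputable def enc (n : ℕ) : Sym2 (Vn n) → ℕ :=
  fun e => ((Fintype.equivFin (Sym2 (Vn n))) e : ℕ)

noncomputable def lab (n : ℕ) : Sym2 (Vn n) → ℕ := fun e => dirE n e * Kc n + enc n e

lemma enc_lt (e : Sym2 (Vn n)) : enc n e < Kc n := ((Fintype.equivFin (Sym2 (Vn n))) e).isLt

lemma lab_lt_of_dir_lt {e1 e2 : Sym2 (Vn n)} (h : dirE n e1 < dirE n e2) :
    lab n e1 < lab n e2 := by
  unfold lab
  have h1 := enc_lt (n := n) e1
  calc dirE n e1 * Kc n + enc n e1 < dirE n e1 * Kc n + Kc n := by omega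
    _ = (dirE n e1 + 1) * Kc n := by ring
    _ ≤ dirE n e2 * Kc n := Nat.mul_le_mul_right _ h
    _ ≤ _ := Nat.le_add_right _ _

lemma lab_injective : Function.Injective (lab n) := by
  intro a b h
  have hd : dirE n a = dirE n b := by
    rcases lt_trichotomy (dirE n a) (dirE n b) with h1 | h1 | h1
    · exact absurd h (Nat.ne_of_lt (lab_lt_of_dir_lt h1))
    · exact h1
    · exact absurd h.symm (Nat.ne_of_lt (lab_lt_of_dir_lt h1))
  have he : enc n a = enc n b := by unfold lab at h; rw [hd] at h; omega
  exact (Fintype.equivFin (Sym2 (Vn n))).injective (Fin.val_injective he)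

lemma dirE_le_of_lab_lt {e1 e2 : Sym2 (Vn n)} (h : lab n e1 < lab n e2) :
    dirE n e1 ≤ dirE n e2 := by
  by_contra hc
  push_neg at hc
  exact absurd (lab_lt_of_dir_lt hc) (by omega)

noncomputable def labels {u v : Vn n} (p : (Q n).Walk u v) : List ℕ := p.edges.map (lab n)

lemma dirE_dart_edge (d : (Q n).Dart) : dirE n d.edge = dir d.fst d.snd := by
  rcases d with ⟨⟨a, b⟩, hab⟩
  rfl

lemma chain'_and {α : Type*} {R S : α → α → Prop} :
    ∀ {l : List α}, l.Chain' R → l.Chain' S → l.Chain' (fun a b => R a b ∧ S a b)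
  | [], _, _ => List.isChain_nil
  | [_], _, _ => List.isChain_singleton _
  | _ :: _ :: _, hR, hS => by
    change List.IsChain _ _ at hR hS ⊢
    rw [List.isChain_cons_cons] at *
    exact ⟨⟨hR.1, hS.1⟩, chain'_and hR.2 hS.2⟩

lemma dirs_chain_of_labels_chain {u v : Vn n} (p : (Q n).Walk u v)
    (h : (labels p).Chain' (· < ·)) : (dirs p).Chain' (· < ·) := by
  have h1 : p.darts.Chain' (fun d d' : (Q n).Dart => lab n d.edge < lab n d'.edge) := by
    rw [labels, SimpleGraph.Walk.edges, List.map_map] at h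
    exact (List.isChain_map _).mp h
  have h2 := p.isChain_dartAdj_darts
  have h3 := chain'_and h1 h2
  rw [dirs]
  show List.IsChain _ _
  rw [List.isChain_map]
  refine h3.imp ?_
  rintro d d' ⟨hl, ha⟩
  have hle : dirE n d.edge ≤ dirE n d'.edge := dirE_le_of_lab_lt hl
  rcases lt_or_eq_of_le hle with hlt | heq
  · rwa [dirE_dart_edge, dirE_dart_edge] at hlt
  · exfalso
    have hadj1 : (Q n).Adj d.snd d.fst := d.adj.symm
    have hadj2 : (Q n).Adj d.snd d'.snd := by rw [ha]; exact d'.adj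
    have hdir : dir d.snd d.fst = dir d.snd d'.snd := by
      rw [dir_comm d.snd d.fst, ← dirE_dart_edge d, heq, dirE_dart_edge d', ha]
    have hfs : d.fst = d'.snd := adj_unique hadj1 hadj2 hdir
    have hedge : d.edge = d'.edge := by
      have h4 : d.edge = s(d.fst, d.snd) := rfl
      have h5 : d'.edge = s(d'.fst, d'.snd) := rfl
      rw [h4, h5, ← ha, ← hfs, Sym2.eq_swap]
    rw [hedge] at hl
    exact lt_irrefl _ hl

lemma nodup_of_chain' {l : List ℕ} (h : l.Chain' (· < ·)) : l.Nodup :=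
  (List.isChain_iff_pairwise.mp h).imp (fun hab => Nat.ne_of_lt hab)

def fset (G : (Q n).Subgraph) (x : Vn n) : Set ℕ :=
  {l | ∃ u, ∃ p : (Q n).Walk u x, p.toSubgraph ≤ G ∧ (labels p).Chain' (· < ·) ∧ p.length = l}

noncomputable def fmax (G : (Q n).Subgraph) (x : Vn n) : ℕ := sSup (fset G x)

lemma fset_bddAbove (G : (Q n).Subgraph) (x : Vn n) : BddAbove (fset G x) := by
  refine ⟨n, fun l hl => ?_⟩
  obtain ⟨u, p, _, hc, rfl⟩ := hl
  exact length_le_of_dirs_nodup p (nodup_of_chain' (dirs_chain_of_labels_chain p hc))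

lemma zero_mem_fset {G : (Q n).Subgraph} {x : Vn n} (hx : x ∈ G.verts) : 0 ∈ fset G x := by
  refine ⟨x, SimpleGraph.Walk.nil, ?_, ?_, rfl⟩
  · show (Q n).singletonSubgraph x ≤ G
    exact (SimpleGraph.singletonSubgraph_le_iff x G).mpr hx
  · show (List.map _ []).Chain' (· < ·)
    exact List.isChain_nil

lemma fmax_mem_fset {G : (Q n).Subgraph} {x : Vn n} (hx : x ∈ G.verts) :
    fmax G x ∈ fset G x :=
  Nat.sSup_mem ⟨0, zero_mem_fset hx⟩ (fset_bddAbove G x)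

lemma nat_sSup_empty : sSup (∅ : Set ℕ) = 0 := by
  rw [csSup_empty]; rfl

lemma fmax_mono {G G' : (Q n).Subgraph} (h : G' ≤ G) (x : Vn n) : fmax G' x ≤ fmax G x := by
  by_cases hx : (fset G' x).Nonempty
  · obtain ⟨u, p, hp, hc, hl⟩ := Nat.sSup_mem hx (fset_bddAbove G' x)
    exact le_csSup (fset_bddAbove G x) ⟨u, p, le_trans hp h, hc, hl⟩
  · rw [Set.not_nonempty_iff_eq_empty] at hx
    rw [fmax, hx, nat_sSup_empty]
    exact Nat.zero_le _

lemma fmax_eq_zero_of_not_mem {G : (Q n).Subgraph} {x : Vn n} (hx : x ∉ G.verts) :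
    fmax G x = 0 := by
  have he : fset G x = ∅ := by
    ext l
    simp only [Set.mem_empty_iff_false, iff_false]
    rintro ⟨u, p, hp, _, _⟩
    exact hx (SimpleGraph.Subgraph.verts_mono hp p.end_mem_verts_toSubgraph)
  rw [fmax, he, nat_sSup_empty]

lemma edgeSet_deleteEdges' (G : (Q n).Subgraph) (s : Set (Sym2 (Vn n))) :
    (G.deleteEdges s).edgeSet = G.edgeSet \ s := by
  ext e
  induction e using Sym2.ind with
  | _ x y =>
    simp [SimpleGraph.Subgraph.mem_edgeSet, SimpleGraph.Subgraph.deleteEdges_adj]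

lemma fmax_step {G : (Q n).Subgraph} {x y : Vn n} (hxy : G.Adj x y)
    (hmax : ∀ e' ∈ G.edgeSet, lab n e' ≤ lab n s(x, y)) :
    fmax (G.deleteEdges {s(x, y)}) y + 1 ≤ fmax G x := by
  set G' := G.deleteEdges {s(x, y)} with hG'
  have hyv : y ∈ G'.verts := by
    rw [hG', SimpleGraph.Subgraph.deleteEdges_verts]
    exact G.edge_vert hxy.symm
  obtain ⟨u, p, hp, hc, hlen⟩ := fmax_mem_fset hyv
  have hadj : (Q n).Adj y x := (G.adj_sub hxy).symm
  set q := p.append (SimpleGraph.Walk.cons hadj SimpleGraph.Walk.nil) with hq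
  have hedges : ∀ e' ∈ p.edges, e' ∈ G'.edgeSet := by
    intro e' he'
    apply SimpleGraph.Subgraph.edgeSet_mono hp
    rw [SimpleGraph.Walk.edgeSet_toSubgraph]
    exact he'
  have hlabels : labels q = labels p ++ [lab n s(x, y)] := by
    rw [labels, labels, hq, SimpleGraph.Walk.edges_append, List.map_append]
    congr 1
    show List.map (lab n) [s(y, x)] = [lab n s(x, y)]
    rw [Sym2.eq_swap]
    rfl
  have hchain : (labels q).Chain' (· < ·) := by
    rw [hlabels]
    show List.IsChain _ _
    rw [List.isChain_iff_pairwise, List.pairwise_append]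
    refine ⟨List.isChain_iff_pairwise.mp hc, List.pairwise_singleton _ _, ?_⟩
    intro a ha b hb
    rw [List.mem_singleton] at hb
    subst hb
    obtain ⟨e', he', rfl⟩ := List.mem_map.mp ha
    have he'G' : e' ∈ G'.edgeSet := hedges e' he'
    rw [hG', edgeSet_deleteEdges', Set.mem_diff, Set.mem_singleton_iff] at he'G'
    have hle := hmax e' he'G'.1
    have hne : lab n e' ≠ lab n s(x, y) := fun hcon => he'G'.2 (lab_injective hcon)
    omega
  have hqsub : q.toSubgraph ≤ G := by
    rw [hq, SimpleGraph.Walk.toSubgraph_append]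
    refine sup_le (le_trans hp (SimpleGraph.Subgraph.deleteEdges_le _)) ?_
    rw [SimpleGraph.Walk.toSubgraph_cons_nil_eq_subgraphOfAdj]
    exact SimpleGraph.subgraphOfAdj_le_of_adj G hxy.symm
  have hqlen : q.length = p.length + 1 := by
    rw [hq]
    simp [SimpleGraph.Walk.length_append]
  have hmem : fmax G' y + 1 ∈ fset G x :=
    ⟨u, q, hqsub, hchain, by rw [hqlen, hlen]⟩
  exact le_csSup (fset_bddAbove G x) hmem

lemma sum_fmax_ge (m : ℕ) : ∀ G : (Q n).Subgraph, G.edgeSet.ncard = m →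
    2 * m ≤ ∑ v : Vn n, fmax G v := by
  induction m with
  | zero => intro G _; exact Nat.zero_le _
  | succ m ih =>
    intro G hm
    have hfin : G.edgeSet.Finite := Set.toFinite _
    have hnee : G.edgeSet.Nonempty := Set.nonempty_of_ncard_ne_zero (by omega)
    obtain ⟨e, he, hmaxe⟩ := Set.exists_max_image G.edgeSet (lab n) hfin hnee
    induction e using Sym2.ind with
    | _ x y =>
    have hxyadj : G.Adj x y := (SimpleGraph.Subgraph.mem_edgeSet).mp he
    have hxyne : x ≠ y := (Q n).ne_of_adj (G.adj_sub hxyadj)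
    set G' := G.deleteEdges {s(x, y)} with hG'
    have hG'e : G'.edgeSet = G.edgeSet \ {s(x, y)} := edgeSet_deleteEdges' G _
    have hG'card : G'.edgeSet.ncard = m := by
      rw [hG'e]
      have h1 := Set.ncard_diff_singleton_add_one he hfin
      omega
    have hle : G' ≤ G := SimpleGraph.Subgraph.deleteEdges_le _
    have hIH := ih G' hG'card
    have h1 : fmax G' y + 1 ≤ fmax G x := fmax_step hxyadj hmaxe
    have h2 : fmax G' x + 1 ≤ fmax G y := by
      have hmaxe' : ∀ e' ∈ G.edgeSet, lab n e' ≤ lab n s(y, x) := by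
        rw [Sym2.eq_swap]; exact hmaxe
      have hGG : G.deleteEdges {s(y, x)} = G' := by rw [hG', Sym2.eq_swap]
      have := fmax_step hxyadj.symm hmaxe'
      rwa [hGG] at this
    have hy' : y ∈ (Finset.univ.erase x) := Finset.mem_erase.mpr ⟨hxyne.symm, Finset.mem_univ y⟩
    have split : ∀ g : Vn n → ℕ,
        ∑ v : Vn n, g v = g x + (g y + ∑ v ∈ (Finset.univ.erase x).erase y, g v) := by
      intro g
      rw [← Finset.add_sum_erase _ g (Finset.mem_univ x), ← Finset.add_sum_erase _ g hy']
    have hrest : ∑ v ∈ (Finset.univ.erase x).erase y, fmax G' v ≤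
        ∑ v ∈ (Finset.univ.erase x).erase y, fmax G v :=
      Finset.sum_le_sum fun v _ => fmax_mono hle v
    have sG := split (fmax G)
    have sG' := split (fmax G')
    omega

end Aux

/-- Every subgraph `G` of `Q n` of average degree `d` contains a geodesic of length at
least `d`. -/
theorem stmt0 (n : ℕ) (G : (Q n).Subgraph) (d : ℝ) (hne : G.verts.Nonempty)
    (hd : d = 2 * G.edgeSet.ncard / G.verts.ncard) :
    ∃ (u v : Fin n → Bool) (p : (Q n).Walk u v),
      p.toSubgraph ≤ G ∧ IsGeodesic p ∧ d ≤ p.length := by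
  classical
  have hvfin : G.verts.Finite := Set.toFinite _
  obtain ⟨v₀, hv₀, hvmax⟩ := Set.exists_max_image G.verts (fmax G) hvfin hne
  have hsum := sum_fmax_ge G.edgeSet.ncard G rfl
  have hzero : ∀ v ∈ Finset.univ, v ∉ hvfin.toFinset → fmax G v = 0 := by
    intro v _ hv
    rw [Set.Finite.mem_toFinset] at hv
    exact fmax_eq_zero_of_not_mem hv
  have heq : ∑ v ∈ hvfin.toFinset, fmax G v = ∑ v : Vn n, fmax G v :=
    Finset.sum_subset (Finset.subset_univ _) hzero
  have hbound : ∑ v ∈ hvfin.toFinset, fmax G v ≤ hvfin.toFinset.card * fmax G v₀ := by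
    calc ∑ v ∈ hvfin.toFinset, fmax G v ≤ hvfin.toFinset.card • fmax G v₀ :=
          Finset.sum_le_card_nsmul _ _ _
            (fun v hv => hvmax v ((Set.Finite.mem_toFinset _).mp hv))
      _ = _ := smul_eq_mul ..
  have hcard : hvfin.toFinset.card = G.verts.ncard :=
    (Set.ncard_eq_toFinset_card _ hvfin).symm
  have hnat : 2 * G.edgeSet.ncard ≤ G.verts.ncard * fmax G v₀ := by
    rw [← hcard]
    omega
  obtain ⟨u, p, hp, hc, hlen⟩ := fmax_mem_fset hv₀
  have hnodup : (dirs p).Nodup := nodup_of_chain' (dirs_chain_of_labels_chain p hc)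
  refine ⟨u, v₀, p, hp, ⟨isPath_of_dirs_nodup p hnodup, hnodup⟩, ?_⟩
  have hNpos : 0 < G.verts.ncard := (Set.ncard_pos hvfin).mpr hne
  rw [hd, div_le_iff₀ (by exact_mod_cast hNpos)]
  have : 2 * G.edgeSet.ncard ≤ p.length * G.verts.ncard := by
    rw [hlen, Nat.mul_comm (fmax G v₀) G.verts.ncard]
    exact hnat
  exact_mod_cast this
end

section
/- For any subgraph G of Q_n, the sum over all vertices v of G of the maximum length of an increasing geodesic in G ending at v is at least 2|E(G)| (equivalently, at least d|G| where d is the average degree). -/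
open SimpleGraph Finset
open scoped symmDiff

namespace IncAux

variable {n : ℕ}

/-- Flip coordinate `i`. -/
def flip (i : Fin n) (x : Fin n → Bool) : Fin n → Bool := Function.update x i (!x i)

lemma flip_apply (i : Fin n) (x : Fin n → Bool) (j : Fin n) :
    flip i x j = if j = i then !x i else x j := by
  simp [flip, Function.update_apply]

@[simp] lemma flip_self (i : Fin n) (x : Fin n → Bool) : flip i x i = !x i := by
  simp [flip_apply]

@[simp] lemma flip_flip (i : Fin n) (x : Fin n → Bool) : flip i (flip i x) = x := by
  funext j
  by_cases h : j = i <;> simp [flip_apply, h]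

lemma flip_ne (i : Fin n) (x : Fin n → Bool) : flip i x ≠ x := by
  intro h
  have := congrFun h i
  simp at this

lemma filter_flip (i : Fin n) (x : Fin n → Bool) :
    (Finset.univ.filter fun j => x j ≠ flip i x j) = {i} := by
  ext j
  by_cases h : j = i <;> simp [flip_apply, h]

lemma adj_iff {x y : Fin n → Bool} : (Q n).Adj x y ↔ ∃ i, y = flip i x := by
  constructor
  · intro h
    have h' : (Finset.univ.filter fun i => x i ≠ y i).card = 1 := h
    obtain ⟨i, hi⟩ := Finset.card_eq_one.mp h'
    refine ⟨i, funext fun j => ?_⟩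
    by_cases hj : j = i
    · subst hj
      have : j ∈ Finset.univ.filter fun i => x i ≠ y i := hi ▸ Finset.mem_singleton_self j
      have hne : x j ≠ y j := by simpa using this
      simp only [flip_self]
      cases hx : x j <;> cases hy : y j <;> simp_all
    · have : j ∉ Finset.univ.filter fun i => x i ≠ y i := by
        rw [hi]; simpa using hj
      have : ¬ x j ≠ y j := by simpa using this
      rw [flip_apply, if_neg hj]
      exact (not_not.mp this).symm
  · rintro ⟨i, rfl⟩
    show (Finset.univ.filter fun j => x j ≠ flip i x j).card = 1
    rw [filter_flip]
    simp

lemma dir_flip (i : Fin n) (x : Fin n → Bool) : dir x (flip i x) = (i : ℕ) := by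
  rw [dir, filter_flip]
  simp

lemma eq_flip_of_adj {x y : Fin n → Bool} (h : (Q n).Adj x y) :
    ∃ i : Fin n, y = flip i x ∧ dir x y = (i : ℕ) := by
  obtain ⟨i, rfl⟩ := adj_iff.mp h
  exact ⟨i, rfl, dir_flip i x⟩

lemma dir_lt {x y : Fin n → Bool} (h : (Q n).Adj x y) : dir x y < n := by
  obtain ⟨i, _, hd⟩ := eq_flip_of_adj h
  rw [hd]; exact i.isLt

lemma darts_toSubgraph_adj {u v : Fin n → Bool} (p : (Q n).Walk u v) :
    ∀ d ∈ p.darts, p.toSubgraph.Adj d.fst d.snd := by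
  induction p with
  | nil => simp
  | cons h q ih =>
    intro d hd
    rw [Walk.darts_cons] at hd
    rcases List.mem_cons.mp hd with h1 | h1
    · subst h1
      exact Subgraph.sup_adj.mpr (Or.inl (by simp))
    · exact Subgraph.sup_adj.mpr (Or.inr (ih d h1))

lemma coord_const {u x : Fin n → Bool} (p : (Q n).Walk u x) (i : Fin n)
    (hd : ∀ d ∈ p.darts, dir d.fst d.snd ≠ (i : ℕ)) :
    ∀ w ∈ p.support, w i = x i := by
  induction p with
  | nil => intro w hw; simp at hw; subst hw; rfl
  | @cons a b c h q ih =>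
    intro w hw
    have hb : b i = c i := by
      apply ih
      · intro d hd'
        exact hd d (by rw [Walk.darts_cons]; exact List.mem_cons_of_mem _ hd')
      · exact Walk.start_mem_support q
    rw [Walk.support_cons] at hw
    rcases List.mem_cons.mp hw with h1 | h1
    · subst h1
      obtain ⟨j, hj, hdj⟩ := eq_flip_of_adj h
      have hji : j ≠ i := by
        intro hji
        exact hd ⟨(w, b), h⟩ (by rw [Walk.darts_cons]; exact List.mem_cons_self)
          (by simpa [hji] using hdj)
      have : b i = w i := by rw [hj, flip_apply, if_neg (Ne.symm hji)]
      rw [← hb, this]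
    · apply ih
      · intro d hd'
        exact hd d (by rw [Walk.darts_cons]; exact List.mem_cons_of_mem _ hd')
      · exact h1

/-- The defining set of `maxInc`. -/
def IncSet (G : (Q n).Subgraph) (x : Fin n → Bool) : Set ℕ :=
  {l | ∃ u, ∃ p : (Q n).Walk u x, p.toSubgraph ≤ G ∧ IsIncGeodesic p ∧ p.length = l}

lemma maxInc_eq (G : (Q n).Subgraph) (x : Fin n → Bool) : maxInc G x = sSup (IncSet G x) := rfl

lemma bddAbove_incSet (G : (Q n).Subgraph) (x : Fin n → Bool) : BddAbove (IncSet G x) := by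
  refine ⟨Fintype.card (Fin n → Bool), ?_⟩
  rintro l ⟨u, p, _, hg, hl⟩
  exact hl ▸ hg.1.length_lt.le

lemma le_maxInc {G : (Q n).Subgraph} {x : Fin n → Bool} {l : ℕ} (h : l ∈ IncSet G x) :
    l ≤ maxInc G x :=
  le_csSup (bddAbove_incSet G x) h

lemma incSet_nonempty {G : (Q n).Subgraph} {x : Fin n → Bool} (hx : x ∈ G.verts) :
    (IncSet G x).Nonempty := by
  refine ⟨0, x, Walk.nil, ?_, ⟨Walk.IsPath.nil, List.isChain_nil⟩, rfl⟩
  show (Q n).singletonSubgraph x ≤ G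
  exact (singletonSubgraph_le_iff x G).mpr hx

lemma maxInc_mem {G : (Q n).Subgraph} {x : Fin n → Bool} (hx : x ∈ G.verts) :
    maxInc G x ∈ IncSet G x :=
  Nat.sSup_mem (incSet_nonempty hx) (bddAbove_incSet G x)

lemma maxInc_mono {G G' : (Q n).Subgraph} (h : G' ≤ G) (x : Fin n → Bool) :
    maxInc G' x ≤ maxInc G x := by
  by_cases hS : (IncSet G' x).Nonempty
  · exact csSup_le_csSup (bddAbove_incSet G x) hS
      (fun l ⟨u, p, hp, hg, hl⟩ => ⟨u, p, hp.trans h, hg, hl⟩)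
  · rw [Set.not_nonempty_iff_eq_empty] at hS
    rw [maxInc_eq, hS]
    simp

/-- The key extension lemma: an increasing geodesic ending at `x` all of whose directions
are `< i` can be extended by an edge from `x` to `flip i x`. -/
lemma extend_le {G G' : (Q n).Subgraph} (hle : G' ≤ G) {x y : Fin n → Bool} (i : Fin n)
    (hG' : ∀ a b, G'.Adj a b → dir a b < (i : ℕ)) (hx : x ∈ G'.verts)
    (hxy : G.Adj x y) (hyx : y = flip i x) :
    maxInc G' x + 1 ≤ maxInc G y := by
  obtain ⟨u, p, hpG, ⟨hpath, hchain⟩, hlen⟩ := maxInc_mem hx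
  have hdlt : ∀ d ∈ p.darts, dir d.fst d.snd < (i : ℕ) := fun d hd =>
    hG' _ _ (hpG.2 (darts_toSubgraph_adj p d hd))
  have hconst : ∀ w ∈ p.support, w i = x i :=
    coord_const p i (fun d hd => (hdlt d hd).ne)
  have hy : y ∉ p.support := by
    intro hy
    have h1 := hconst y hy
    rw [hyx] at h1
    simp at h1
  have hadj : (Q n).Adj x y := hxy.adj_sub
  set q := p.concat hadj with hq
  have hqpath : q.IsPath := by
    rw [Walk.isPath_def, hq, Walk.support_concat,
      List.nodup_append]
    refine ⟨hpath.support_nodup, List.nodup_singleton y, ?_⟩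
    intro a ha b hb
    rw [List.mem_singleton] at hb
    subst hb
    exact fun h => hy (h ▸ ha)
  have hdirsq : dirs q = dirs p ++ [dir x y] := by
    rw [dirs, hq, Walk.darts_concat, List.concat_eq_append, List.map_append]
    rfl
  have hdxy : dir x y = (i : ℕ) := by rw [hyx]; exact dir_flip i x
  have hqchain : (dirs q).Chain' (· < ·) := by
    rw [hdirsq]
    refine List.IsChain.append hchain (List.isChain_singleton _) ?_
    intro a ha b hb
    have hb' : dir x y = b := by simpa using hb
    have ha' : a ∈ dirs p := List.mem_of_mem_getLast? ha
    obtain ⟨d, hd, hda⟩ := List.mem_map.mp ha'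
    rw [← hb', hdxy, ← hda]
    exact hdlt d hd
  have hqsub : q.toSubgraph ≤ G := by
    rw [hq, Walk.concat_eq_append, Walk.toSubgraph_append]
    refine sup_le (hpG.trans hle) ?_
    rw [Walk.toSubgraph_cons_nil_eq_subgraphOfAdj]
    exact subgraphOfAdj_le_of_adj G hxy
  have hqlen : q.length = maxInc G' x + 1 := by
    rw [hq, Walk.length_concat, hlen]
  exact le_maxInc ⟨u, q, hqsub, ⟨hqpath, hqchain⟩, hqlen⟩

lemma main (k : ℕ) (G : (Q n).Subgraph) (hG : ∀ a b, G.Adj a b → dir a b < k) :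
    2 * G.edgeSet.ncard ≤ ∑ v ∈ (Set.toFinite G.verts).toFinset, maxInc G v := by
  induction k generalizing G with
  | zero =>
    have he : G.edgeSet = ∅ := by
      ext e
      induction e using Sym2.ind with
      | _ a b =>
        simp only [Subgraph.mem_edgeSet, Set.mem_empty_iff_false, iff_false]
        intro h
        exact absurd (hG a b h) (Nat.not_lt_zero _)
    simp [he]
  | succ k ih =>
    classical
    by_cases hk : k < n
    swap
    · refine ih G (fun a b hab => lt_of_lt_of_le (dir_lt hab.adj_sub) (le_of_not_gt hk))
    set i : Fin n := ⟨k, hk⟩ with hi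
    set D : Set (Sym2 (Fin n → Bool)) := Set.range fun v => s(v, flip i v) with hD
    set G' := G.deleteEdges D with hG'def
    have hvertsG' : G'.verts = G.verts := Subgraph.deleteEdges_verts D
    have hleG : G' ≤ G := Subgraph.deleteEdges_le D
    -- directions in G' are < k
    have hG' : ∀ a b, G'.Adj a b → dir a b < k := by
      intro a b h
      have hGa : G.Adj a b := hleG.2 h
      have hnd : s(a, b) ∉ D := ((Subgraph.deleteEdges_adj D a b).mp h).2
      have hle : dir a b < k + 1 := hG a b hGa
      rcases Nat.lt_succ_iff_lt_or_eq.mp hle with h1 | h1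
      · exact h1
      · exfalso
        obtain ⟨j, hj, hdj⟩ := eq_flip_of_adj hGa.adj_sub
        have hji : j = i := Fin.ext (hdj.symm.trans h1)
        exact hnd ⟨a, by rw [hj, hji]⟩
    set Vf : Finset (Fin n → Bool) := (Set.toFinite G.verts).toFinset with hVf
    have hVf' : (Set.toFinite G'.verts).toFinset = Vf := by
      ext v; simp [hVf, Set.Finite.mem_toFinset, hvertsG']
    set C : Finset (Fin n → Bool) := Vf.filter (fun v => G.Adj v (flip i v)) with hC
    have memC : ∀ v, v ∈ C ↔ G.Adj v (flip i v) := by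
      intro v
      simp only [hC, Finset.mem_filter, hVf, Set.Finite.mem_toFinset]
      exact ⟨fun h => h.2, fun h => ⟨h.fst_mem, h⟩⟩
    have flip_memC : ∀ v ∈ C, flip i v ∈ C := by
      intro v hv
      rw [memC] at hv ⊢
      rw [flip_flip]
      exact hv.symm
    -- Claim A : sum inequality
    have extC : ∀ v ∈ C, maxInc G' (flip i v) + 1 ≤ maxInc G v := by
      intro v hv
      rw [memC] at hv
      refine extend_le hleG i hG' ?_ hv.symm (flip_flip i v).symm
      rw [hvertsG']
      exact hv.snd_mem
    have hflipsum : ∑ v ∈ C, maxInc G' (flip i v) = ∑ v ∈ C, maxInc G' v := by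
      refine Finset.sum_nbij' (fun v => flip i v) (fun v => flip i v) ?_ ?_ ?_ ?_ ?_
      · exact fun v hv => flip_memC v hv
      · exact fun v hv => flip_memC v hv
      · exact fun v _ => flip_flip i v
      · exact fun v _ => flip_flip i v
      · exact fun v _ => rfl
    have hA : ∑ v ∈ Vf, maxInc G' v + C.card ≤ ∑ v ∈ Vf, maxInc G v := by
      have hsplit : ∀ f : (Fin n → Bool) → ℕ,
          ∑ v ∈ Vf, f v = ∑ v ∈ C, f v + ∑ v ∈ Vf.filter (fun v => ¬ G.Adj v (flip i v)), f v :=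
        fun f => (Finset.sum_filter_add_sum_filter_not Vf _ f).symm
      rw [hsplit (maxInc G'), hsplit (maxInc G)]
      have h1 : ∑ v ∈ C, maxInc G' v + C.card ≤ ∑ v ∈ C, maxInc G v := by
        have heq : ∑ v ∈ C, maxInc G' v + C.card = ∑ v ∈ C, (maxInc G' (flip i v) + 1) := by
          rw [Finset.sum_add_distrib, Finset.sum_const, smul_eq_mul, mul_one, hflipsum]
        rw [heq]
        exact Finset.sum_le_sum extC
      have h2 : ∑ v ∈ Vf.filter (fun v => ¬ G.Adj v (flip i v)), maxInc G' v ≤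
          ∑ v ∈ Vf.filter (fun v => ¬ G.Adj v (flip i v)), maxInc G v :=
        Finset.sum_le_sum fun v _ => maxInc_mono hleG v
      omega
    -- Claim B : edge counting
    set M : Finset (Sym2 (Fin n → Bool)) := C.image (fun v => s(v, flip i v)) with hM
    have hfiber : ∀ e ∈ M, (C.filter fun v => s(v, flip i v) = e).card = 2 := by
      intro e he
      obtain ⟨v₀, hv₀, rfl⟩ := Finset.mem_image.mp he
      have : (C.filter fun v => s(v, flip i v) = s(v₀, flip i v₀)) = {v₀, flip i v₀} := by
        ext w
        simp only [Finset.mem_filter, Finset.mem_insert, Finset.mem_singleton]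
        constructor
        · rintro ⟨hw, hwe⟩
          rcases Sym2.eq_iff.mp hwe with ⟨h1, _⟩ | ⟨h1, _⟩
          · exact Or.inl h1
          · exact Or.inr h1
        · rintro (rfl | rfl)
          · exact ⟨hv₀, rfl⟩
          · refine ⟨flip_memC v₀ hv₀, ?_⟩
            rw [flip_flip]
            exact Sym2.eq_swap
      rw [this, Finset.card_insert_of_notMem (by simpa using (flip_ne i v₀).symm),
        Finset.card_singleton]
    have hCcard : C.card = 2 * M.card := by
      rw [Finset.card_eq_sum_card_image (fun v => s(v, flip i v)) C]
      rw [Finset.sum_congr rfl hfiber, Finset.sum_const, smul_eq_mul, mul_comm]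
    have hsub : G.edgeSet ∩ D ⊆ ↑M := by
      rintro e ⟨heG, heD⟩
      obtain ⟨v, rfl⟩ := heD
      have hadj : G.Adj v (flip i v) := Subgraph.mem_edgeSet.mp heG
      exact Finset.mem_coe.mpr (Finset.mem_image.mpr ⟨v, (memC v).mpr hadj, rfl⟩)
    have hMcard : (G.edgeSet ∩ D).ncard ≤ M.card := by
      have := Set.ncard_le_ncard hsub (Set.toFinite _)
      rwa [Set.ncard_coe_finset] at this
    have hE' : G'.edgeSet = G.edgeSet \ D := by
      ext e
      induction e using Sym2.ind with
      | _ a b =>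
        simp [hG'def, Subgraph.mem_edgeSet, Subgraph.deleteEdges_adj]
    have hEcard : G.edgeSet.ncard ≤ G'.edgeSet.ncard + (G.edgeSet ∩ D).ncard := by
      rw [hE']
      calc G.edgeSet.ncard = ((G.edgeSet \ D) ∪ (G.edgeSet ∩ D)).ncard := by
            rw [Set.diff_union_inter]
        _ ≤ (G.edgeSet \ D).ncard + (G.edgeSet ∩ D).ncard := Set.ncard_union_le _ _
    have hIH := ih G' hG'
    rw [hVf'] at hIH
    have h2M : 2 * (G.edgeSet ∩ D).ncard ≤ C.card := by omega
    omega

end IncAux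

/-- For any subgraph `G` of `Q n`, the sum over the vertices `v` of `G` of the maximum
length of an increasing geodesic in `G` ending at `v` is at least `2|E(G)|`
(equivalently, at least `d|G|` where `d` is the average degree). -/
theorem stmt1 (n : ℕ) (G : (Q n).Subgraph) :
    2 * G.edgeSet.ncard ≤ ∑ᶠ v ∈ G.verts, maxInc G v := by
  have hset : G.verts = ↑((Set.toFinite G.verts).toFinset) := (Set.Finite.coe_toFinset _).symm
  rw [hset, finsum_mem_coe_finset]
  exact IncAux.main n G (fun a b h => IncAux.dir_lt h.adj_sub)
end

section
/- If G is a subgraph of Q_n with average degree at least d, where d is a positive integer, then G contains at least |V(G)| increasing geodesics of length d. -/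
open SimpleGraph Finset
open scoped symmDiff

namespace Stmt3Aux

variable {n : ℕ}

instance : DecidableRel (Q n).Adj := fun x y => inferInstanceAs (Decidable (hammingDist x y = 1))

lemma exists_flip {x y : Fin n → Bool} (h : (Q n).Adj x y) :
    ∃ k : Fin n, (k : ℕ) = dir x y ∧ x k ≠ y k ∧ ∀ j, j ≠ k → x j = y j := by
  have h' : (Finset.univ.filter fun i => x i ≠ y i).card = 1 := h
  obtain ⟨a, ha⟩ := Finset.card_eq_one.mp h'
  refine ⟨a, ?_, ?_, ?_⟩
  · show (a : ℕ) = (Finset.univ.filter fun i => x i ≠ y i).sup fun i => (i : ℕ)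
    rw [ha, Finset.sup_singleton]
  · have : a ∈ Finset.univ.filter fun i => x i ≠ y i := ha ▸ Finset.mem_singleton_self a
    simpa using this
  · intro j hj
    by_contra hne
    have : j ∈ Finset.univ.filter fun i => x i ≠ y i := by simpa using hne
    rw [ha, Finset.mem_singleton] at this
    exact hj this

lemma dir_comm (x y : Fin n → Bool) : dir x y = dir y x := by
  unfold dir
  congr 1
  ext i
  simp [ne_comm]

lemma dir_lt {x y : Fin n → Bool} (h : (Q n).Adj x y) : dir x y < n := by
  obtain ⟨k, hk, -, -⟩ := exists_flip h
  exact hk ▸ k.isLt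

lemma flip_unique {x y y' : Fin n → Bool} (h : (Q n).Adj x y) (h' : (Q n).Adj x y')
    (hd : dir x y = dir x y') : y = y' := by
  obtain ⟨k, hk, hne, hco⟩ := exists_flip h
  obtain ⟨k', hk', hne', hco'⟩ := exists_flip h'
  have hkk : k = k' := by
    apply Fin.val_injective
    rw [hk, hk', hd]
  subst hkk
  funext j
  by_cases hj : j = k
  · subst hj
    revert hne hne'
    cases x j <;> cases y j <;> cases y' j <;> simp
  · rw [← hco j hj, ← hco' j hj]

@[simp] lemma dirs_nil {u : Fin n → Bool} : dirs (SimpleGraph.Walk.nil : (Q n).Walk u u) = [] := rfl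

@[simp] lemma dirs_cons {u w v : Fin n → Bool} (h : (Q n).Adj u w) (q : (Q n).Walk w v) :
    dirs (SimpleGraph.Walk.cons h q) = dir u w :: dirs q := by
  simp [dirs, SimpleGraph.Walk.darts_cons]

@[simp] lemma dirs_concat {u v w : Fin n → Bool} (p : (Q n).Walk u v) (h : (Q n).Adj v w) :
    dirs (p.concat h) = dirs p ++ [dir v w] := by
  simp [dirs, SimpleGraph.Walk.darts_concat]

@[simp] lemma length_dirs {u v : Fin n → Bool} (p : (Q n).Walk u v) :
    (dirs p).length = p.length := by
  simp [dirs, SimpleGraph.Walk.length_darts]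

lemma coord_const {w v : Fin n → Bool} (q : (Q n).Walk w v) (k : Fin n)
    (hk : (k : ℕ) ∉ dirs q) : ∀ y ∈ q.support, y k = w k := by
  induction q with
  | nil => intro y hy; simp at hy; subst hy; rfl
  | @cons a b v h q ih =>
    intro y hy
    rw [SimpleGraph.Walk.support_cons] at hy
    rcases List.mem_cons.mp hy with rfl | hy'
    · rfl
    · rw [dirs_cons] at hk
      have h1 : y k = b k := ih (fun hm => hk (List.mem_cons_of_mem _ hm)) y hy'
      obtain ⟨k₀, hk₀, -, hco⟩ := exists_flip h
      have hkk₀ : k ≠ k₀ := by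
        intro hh
        exact hk (by rw [hh, hk₀]; exact List.mem_cons_self)
      rw [h1, (hco k hkk₀).symm]

lemma chain'_isPath {u v : Fin n → Bool} (p : (Q n).Walk u v)
    (h : (dirs p).Chain' (· < ·)) : p.IsPath := by
  induction p with
  | nil => exact SimpleGraph.Walk.IsPath.nil
  | @cons a b v hadj q ih =>
    rw [dirs_cons] at h
    refine (ih h.tail).cons ?_
    obtain ⟨k, hk, hne, -⟩ := exists_flip hadj
    intro hu
    have hpw := List.isChain_iff_pairwise.mp h
    have hlt : ∀ j ∈ dirs q, dir a b < j := (List.pairwise_cons.mp hpw).1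
    have hk' : (k : ℕ) ∉ dirs q := by
      intro hmem
      have := hlt _ hmem
      omega
    have := coord_const q k hk' a hu
    obtain ⟨k₀, hk₀, hne₀, hco₀⟩ := exists_flip hadj
    have : a k = b k := this
    have hkk : k = k₀ := Fin.val_injective (by rw [hk, hk₀])
    subst hkk
    exact hne₀ this

def dropW {v : Fin n → Bool} : {u : Fin n → Bool} → (Q n).Walk u v → ℕ → Σ w : Fin n → Bool, (Q n).Walk w v
  | _, SimpleGraph.Walk.nil, _ => ⟨_, SimpleGraph.Walk.nil⟩
  | _, SimpleGraph.Walk.cons h q, k =>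
      if q.length + 1 ≤ k then ⟨_, SimpleGraph.Walk.cons h q⟩ else dropW q k

@[simp] lemma dropW_nil {u : Fin n → Bool} (k : ℕ) :
    dropW (SimpleGraph.Walk.nil : (Q n).Walk u u) k = ⟨u, SimpleGraph.Walk.nil⟩ := by rw [dropW]

lemma dropW_cons {a b v : Fin n → Bool} (h : (Q n).Adj a b) (q : (Q n).Walk b v) (k : ℕ) :
    dropW (SimpleGraph.Walk.cons h q) k =
      if q.length + 1 ≤ k then ⟨a, SimpleGraph.Walk.cons h q⟩ else dropW q k := by rw [dropW]

lemma dropW_toSubgraph {v : Fin n → Bool} : ∀ {u : Fin n → Bool} (p : (Q n).Walk u v) (k : ℕ),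
    (dropW p k).2.toSubgraph ≤ p.toSubgraph := by
  intro u p
  induction p with
  | nil => intro k; rw [dropW_nil]
  | @cons a b v h q ih =>
    intro k
    rw [dropW_cons]
    by_cases hle : q.length + 1 ≤ k
    · rw [if_pos hle]
    · rw [if_neg hle]
      exact (ih k).trans (by simp)

lemma dropW_length {v : Fin n → Bool} : ∀ {u : Fin n → Bool} (p : (Q n).Walk u v) (k : ℕ),
    (dropW p k).2.length = min k p.length := by
  intro u p
  induction p with
  | nil => intro k; rw [dropW_nil]; simp
  | @cons a b v h q ih =>
    intro k
    rw [dropW_cons]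
    by_cases hle : q.length + 1 ≤ k
    · rw [if_pos hle]; simp only [SimpleGraph.Walk.length_cons]; omega
    · rw [if_neg hle, ih k]; simp only [SimpleGraph.Walk.length_cons]; omega

lemma dropW_dirs_suffix {v : Fin n → Bool} : ∀ {u : Fin n → Bool} (p : (Q n).Walk u v) (k : ℕ),
    dirs (dropW p k).2 <:+ dirs p := by
  intro u p
  induction p with
  | nil => intro k; rw [dropW_nil]
  | @cons a b v h q ih =>
    intro k
    rw [dropW_cons]
    by_cases hle : q.length + 1 ≤ k
    · rw [if_pos hle]
    · rw [if_neg hle]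
      refine (ih k).trans ?_
      rw [dirs_cons]
      exact List.suffix_cons _ _


def Sset (G : (Q n).Subgraph) (i : ℕ) (u : Fin n → Bool) : Set ℕ :=
  {l | ∃ w, ∃ p : (Q n).Walk w u, p.toSubgraph ≤ G ∧ (dirs p).Chain' (· < ·) ∧
    (∀ j ∈ dirs p, j < i) ∧ p.length = l}

lemma le_of_mem_Sset {G : (Q n).Subgraph} {i : ℕ} {u : Fin n → Bool} {l : ℕ}
    (h : l ∈ Sset G i u) : l ≤ i := by
  obtain ⟨w, p, -, hc, hlt, hl⟩ := h
  have hnd : (dirs p).Nodup := (List.isChain_iff_pairwise.mp hc).imp ne_of_lt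
  have hsub : (dirs p).toFinset ⊆ Finset.range i := fun j hj =>
    Finset.mem_range.mpr (hlt j (List.mem_toFinset.mp hj))
  have h1 : (dirs p).toFinset.card = (dirs p).length := List.toFinset_card_of_nodup hnd
  have h2 := Finset.card_le_card hsub
  rw [h1, length_dirs, hl] at h2
  simpa using h2

lemma bddAbove_Sset (G : (Q n).Subgraph) (i : ℕ) (u : Fin n → Bool) :
    BddAbove (Sset G i u) := ⟨i, fun _ hl => le_of_mem_Sset hl⟩

lemma zero_mem_Sset {G : (Q n).Subgraph} {u : Fin n → Bool} (hu : u ∈ G.verts) (i : ℕ) :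
    0 ∈ Sset G i u := by
  refine ⟨u, SimpleGraph.Walk.nil, ?_, by simp [dirs_nil]; exact List.isChain_nil, by simp [dirs_nil], rfl⟩
  simpa [SimpleGraph.Walk.toSubgraph] using (SimpleGraph.singletonSubgraph_le_iff u G).mpr hu

noncomputable def f (G : (Q n).Subgraph) (i : ℕ) (u : Fin n → Bool) : ℕ := sSup (Sset G i u)

lemma f_mem {G : (Q n).Subgraph} {u : Fin n → Bool} (hu : u ∈ G.verts) (i : ℕ) :
    f G i u ∈ Sset G i u :=
  Nat.sSup_mem ⟨0, zero_mem_Sset hu i⟩ (bddAbove_Sset G i u)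

lemma le_f {G : (Q n).Subgraph} {i : ℕ} {u : Fin n → Bool} {l : ℕ} (h : l ∈ Sset G i u) :
    l ≤ f G i u := le_csSup (bddAbove_Sset G i u) h

lemma f_mono {G : (Q n).Subgraph} {u : Fin n → Bool} (hu : u ∈ G.verts) {i i' : ℕ}
    (h : i ≤ i') : f G i u ≤ f G i' u := by
  obtain ⟨w, p, h1, h2, h3, h4⟩ := f_mem hu i
  exact le_f ⟨w, p, h1, h2, fun j hj => lt_of_lt_of_le (h3 j hj) h, h4⟩

lemma exists_len {G : (Q n).Subgraph} {u : Fin n → Bool} (hu : u ∈ G.verts) {i k : ℕ}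
    (hk : k ≤ f G i u) : k ∈ Sset G i u := by
  obtain ⟨w, p, hps, hch, hlt, hpl⟩ := f_mem hu i
  refine ⟨(dropW p k).1, (dropW p k).2, (dropW_toSubgraph p k).trans hps,
    hch.suffix (dropW_dirs_suffix p k),
    fun j hj => hlt j ((dropW_dirs_suffix p k).subset hj), ?_⟩
  rw [dropW_length, hpl]
  omega

lemma concat_facts {G : (Q n).Subgraph} {u v : Fin n → Bool} {i : ℕ} (h : G.Adj u v)
    (hi : dir u v = i) {w : Fin n → Bool} {p : (Q n).Walk w u} (hps : p.toSubgraph ≤ G)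
    (hch : (dirs p).Chain' (· < ·)) (hlt : ∀ j ∈ dirs p, j < i) :
    (p.concat (G.adj_sub h)).toSubgraph ≤ G ∧
      (dirs (p.concat (G.adj_sub h))).Chain' (· < ·) ∧
      (∀ j ∈ dirs (p.concat (G.adj_sub h)), j < i + 1) := by
  refine ⟨?_, ?_, ?_⟩
  · rw [SimpleGraph.Walk.concat_eq_append, SimpleGraph.Walk.toSubgraph_append]
    refine sup_le hps ?_
    rw [SimpleGraph.Walk.toSubgraph_cons_nil_eq_subgraphOfAdj]
    exact SimpleGraph.subgraphOfAdj_le_of_adj _ h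
  · rw [dirs_concat, hi]
    apply List.IsChain.append hch (List.isChain_singleton i)
    intro x hx y hy
    rw [List.head?_cons, Option.mem_some_iff] at hy
    subst hy
    exact hlt x (List.mem_of_mem_getLast? hx)
  · intro j hj
    rw [dirs_concat, hi] at hj
    rcases List.mem_append.mp hj with hj' | hj'
    · exact lt_trans (hlt j hj') (Nat.lt_succ_self i)
    · rw [List.mem_singleton] at hj'
      omega

lemma f_step {G : (Q n).Subgraph} {u v : Fin n → Bool} {i : ℕ} (h : G.Adj u v)
    (hi : dir u v = i) : f G i u + 1 ≤ f G (i + 1) v := by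
  obtain ⟨w, p, hps, hch, hlt, hpl⟩ := f_mem h.fst_mem i
  obtain ⟨c1, c2, c3⟩ := concat_facts h hi hps hch hlt
  refine le_f ⟨w, p.concat (G.adj_sub h), c1, c2, c3, ?_⟩
  rw [SimpleGraph.Walk.length_concat, hpl]

lemma exists_geo {G : (Q n).Subgraph} {d : ℕ} (hd : 0 < d) {a b : Fin n → Bool}
    (hab : G.Adj a b) (hgood : d - 1 ≤ f G (dir a b) a) :
    ∃ q : Σ u : Fin n → Bool, Σ v : Fin n → Bool, (Q n).Walk u v,
      (q.2.2.toSubgraph ≤ G ∧ IsIncGeodesic q.2.2 ∧ q.2.2.length = d) ∧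
      q.2.2.darts.getLast?.map (fun dd => (dd.fst, dd.snd)) = some (a, b) := by
  obtain ⟨w, p, hps, hch, hlt, hpl⟩ := exists_len hab.fst_mem hgood
  obtain ⟨c1, c2, c3⟩ := concat_facts hab rfl hps hch hlt
  refine ⟨⟨w, b, p.concat (G.adj_sub hab)⟩, ⟨c1, ⟨chain'_isPath _ c2, c2⟩, ?_⟩, ?_⟩
  · rw [SimpleGraph.Walk.length_concat, hpl]
    omega
  · rw [SimpleGraph.Walk.darts_concat, List.concat_eq_append, List.getLast?_concat]
    rfl

open scoped Classical

noncomputable def F (G : (Q n).Subgraph) (d i : ℕ) (u : Fin n → Bool) : ℕ :=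
  min (f G i u) (d - 1)

noncomputable def VT (G : (Q n).Subgraph) : Finset (Fin n → Bool) := G.verts.toFinset

noncomputable def A (G : (Q n).Subgraph) (d i : ℕ) : ℕ := ∑ u ∈ VT G, F G d i u

noncomputable def PF (G : (Q n).Subgraph) (i : ℕ) : Finset ((Fin n → Bool) × (Fin n → Bool)) :=
  Finset.univ.filter fun p => G.Adj p.1 p.2 ∧ dir p.1 p.2 = i

noncomputable def gset (G : (Q n).Subgraph) (d i : ℕ) :
    Finset ((Fin n → Bool) × (Fin n → Bool)) :=
  (PF G i).filter fun p => d - 1 ≤ f G i p.1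

noncomputable def B (G : (Q n).Subgraph) (d : ℕ) : Finset ((Fin n → Bool) × (Fin n → Bool)) :=
  Finset.univ.filter fun p => G.Adj p.1 p.2 ∧ d - 1 ≤ f G (dir p.1 p.2) p.1

lemma Fstep {G : (Q n).Subgraph} {d : ℕ} {u v : Fin n → Bool} {i : ℕ} (h : G.Adj u v)
    (hi : dir u v = i) :
    F G d i u + 1 ≤ F G d (i + 1) v + (if d - 1 ≤ f G i u then 1 else 0) := by
  have h1 := f_step h hi
  unfold F
  by_cases hg : d - 1 ≤ f G i u <;> simp only [hg, if_true, if_false] <;> omega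

lemma snd_inj {G : (Q n).Subgraph} {i : ℕ} :
    ∀ p ∈ PF G i, ∀ q ∈ PF G i, p.2 = q.2 → p = q := by
  intro p hp q hq h2
  rw [PF, Finset.mem_filter] at hp hq
  obtain ⟨-, hpa, hpd⟩ := hp
  obtain ⟨-, hqa, hqd⟩ := hq
  have h3 : (Q n).Adj p.2 q.1 := h2 ▸ G.adj_sub hqa.symm
  have h4 : dir p.2 p.1 = dir p.2 q.1 := by
    rw [dir_comm p.2 p.1, hpd, dir_comm p.2 q.1, h2, hqd]
  have h5 : p.1 = q.1 := flip_unique (G.adj_sub hpa.symm) h3 h4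
  exact Prod.ext h5 h2

lemma fst_mem_VT {G : (Q n).Subgraph} {i : ℕ} {p : (Fin n → Bool) × (Fin n → Bool)}
    (hp : p ∈ PF G i) : p.1 ∈ VT G := by
  rw [PF, Finset.mem_filter] at hp
  rw [VT, Set.mem_toFinset]
  exact hp.2.1.fst_mem

lemma snd_mem_VT {G : (Q n).Subgraph} {i : ℕ} {p : (Fin n → Bool) × (Fin n → Bool)}
    (hp : p ∈ PF G i) : p.2 ∈ VT G := by
  rw [PF, Finset.mem_filter] at hp
  rw [VT, Set.mem_toFinset]
  exact hp.2.1.snd_mem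

lemma swap_mem_PF {G : (Q n).Subgraph} {i : ℕ} {p : (Fin n → Bool) × (Fin n → Bool)}
    (hp : p ∈ PF G i) : p.swap ∈ PF G i := by
  rw [PF, Finset.mem_filter] at hp ⊢
  exact ⟨Finset.mem_univ _, hp.2.1.symm, (dir_comm _ _).trans hp.2.2⟩

lemma stepA (G : (Q n).Subgraph) (d : ℕ) (i : ℕ) :
    A G d i + (PF G i).card ≤ A G d (i + 1) + (gset G d i).card := by
  set I : Finset (Fin n → Bool) := (PF G i).image Prod.snd with hI
  have hIsub : I ⊆ VT G := by
    intro v hv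
    rw [hI, Finset.mem_image] at hv
    obtain ⟨p, hp, rfl⟩ := hv
    exact snd_mem_VT hp
  have hsum1 : ∑ v ∈ I, F G d (i + 1) v = ∑ p ∈ PF G i, F G d (i + 1) p.2 :=
    Finset.sum_image snd_inj
  have hsum1' : ∑ v ∈ I, F G d i v = ∑ p ∈ PF G i, F G d i p.2 :=
    Finset.sum_image snd_inj
  have hA1 : ∑ v ∈ VT G \ I, F G d (i + 1) v + ∑ v ∈ I, F G d (i + 1) v = A G d (i + 1) :=
    Finset.sum_sdiff hIsub
  have hA0 : ∑ v ∈ VT G \ I, F G d i v + ∑ v ∈ I, F G d i v = A G d i :=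
    Finset.sum_sdiff hIsub
  have hmono : ∑ v ∈ VT G \ I, F G d i v ≤ ∑ v ∈ VT G \ I, F G d (i + 1) v := by
    refine Finset.sum_le_sum fun v hv => ?_
    have hv' : v ∈ G.verts := by
      have := (Finset.mem_sdiff.mp hv).1
      rwa [VT, Set.mem_toFinset] at this
    exact min_le_min (f_mono hv' (Nat.le_succ i)) le_rfl
  have hswap : ∑ p ∈ PF G i, F G d i p.1 = ∑ p ∈ PF G i, F G d i p.2 := by
    refine Finset.sum_nbij' Prod.swap Prod.swap (fun p hp => swap_mem_PF hp)
      (fun p hp => swap_mem_PF hp) (fun p _ => Prod.swap_swap p)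
      (fun p _ => Prod.swap_swap p) (fun p _ => rfl)
  have hpair : ∑ p ∈ PF G i, (F G d i p.1 + 1) ≤
      ∑ p ∈ PF G i, (F G d (i + 1) p.2 + if d - 1 ≤ f G i p.1 then 1 else 0) := by
    refine Finset.sum_le_sum fun p hp => ?_
    rw [PF, Finset.mem_filter] at hp
    exact Fstep hp.2.1 hp.2.2
  have hite : ∑ p ∈ PF G i, (if d - 1 ≤ f G i p.1 then 1 else 0) = (gset G d i).card := by
    rw [gset, Finset.sum_boole]
    simp
  rw [Finset.sum_add_distrib, Finset.sum_const, smul_eq_mul, mul_one] at hpair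
  rw [Finset.sum_add_distrib, hite] at hpair
  omega

lemma GK (G : (Q n).Subgraph) (d : ℕ) :
    ∀ m : ℕ, ∑ j ∈ Finset.range m, (PF G j).card ≤
      A G d m + ∑ j ∈ Finset.range m, (gset G d j).card := by
  intro m
  induction m with
  | zero => simp
  | succ m ih =>
    rw [Finset.sum_range_succ, Finset.sum_range_succ]
    have := stepA G d m
    omega


noncomputable def OP (G : (Q n).Subgraph) : Finset ((Fin n → Bool) × (Fin n → Bool)) :=
  Finset.univ.filter fun p => G.Adj p.1 p.2

lemma OP_card (G : (Q n).Subgraph) : (OP G).card = ∑ j ∈ Finset.range n, (PF G j).card := by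
  refine Finset.card_eq_sum_card_fiberwise (f := fun p => dir p.1 p.2) (t := Finset.range n) ?_ |>.trans ?_
  · intro p hp
    simp only [Finset.mem_coe, OP, Finset.mem_filter] at hp
    exact Finset.mem_range.mpr (dir_lt (G.adj_sub hp.2))
  · refine Finset.sum_congr rfl fun j _ => ?_
    congr 1
    rw [OP, PF, Finset.filter_filter]

lemma B_card (G : (Q n).Subgraph) (d : ℕ) :
    (B G d).card = ∑ j ∈ Finset.range n, (gset G d j).card := by
  refine Finset.card_eq_sum_card_fiberwise (f := fun p => dir p.1 p.2) (t := Finset.range n) ?_ |>.trans ?_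
  · intro p hp
    simp only [Finset.mem_coe, B, Finset.mem_filter] at hp
    exact Finset.mem_range.mpr (dir_lt (G.adj_sub hp.2.1))
  · refine Finset.sum_congr rfl fun j _ => ?_
    congr 1
    rw [B, gset, PF, Finset.filter_filter, Finset.filter_filter]
    apply Finset.filter_congr
    intro p _
    constructor
    · rintro ⟨⟨ha, hf⟩, hdir⟩
      exact ⟨⟨ha, hdir⟩, hdir ▸ hf⟩
    · rintro ⟨⟨ha, hdir⟩, hf⟩
      exact ⟨⟨ha, hdir ▸ hf⟩, hdir⟩

lemma two_E (G : (Q n).Subgraph) : (OP G).card = 2 * G.edgeSet.ncard := by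
  have hE : G.edgeSet.ncard = G.edgeSet.toFinset.card := Set.ncard_eq_toFinset_card' _
  rw [hE]
  refine Finset.card_eq_sum_card_fiberwise
      (f := fun p : (Fin n → Bool) × (Fin n → Bool) => Sym2.mk p.1 p.2) (t := G.edgeSet.toFinset)
      ?_ |>.trans ?_
  · intro p hp
    simp only [Finset.mem_coe, OP, Finset.mem_filter] at hp
    rw [Finset.mem_coe, Set.mem_toFinset]
    exact Subgraph.mem_edgeSet.mpr hp.2
  · rw [Finset.sum_congr rfl (g := fun _ => 2) ?_, Finset.sum_const, smul_eq_mul, mul_comm]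
    intro e he
    rw [Set.mem_toFinset] at he
    induction e with
    | h a b =>
      have hab : G.Adj a b := Subgraph.mem_edgeSet.mp he
      have hne : a ≠ b := (G.adj_sub hab).ne
      have : (OP G).filter (fun p => Sym2.mk p.1 p.2 = s(a, b)) = {(a, b), (b, a)} := by
        ext p
        rw [Finset.mem_filter, OP, Finset.mem_filter]
        constructor
        · rintro ⟨⟨-, hadj⟩, hs⟩
          rw [Sym2.eq_iff] at hs
          rcases hs with ⟨h1, h2⟩ | ⟨h1, h2⟩
          · exact Finset.mem_insert.mpr (Or.inl (Prod.ext h1 h2))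
          · exact Finset.mem_insert.mpr (Or.inr (Finset.mem_singleton.mpr (Prod.ext h1 h2)))
        · intro hp
          rcases Finset.mem_insert.mp hp with rfl | hp'
          · exact ⟨⟨Finset.mem_univ _, hab⟩, rfl⟩
          · rw [Finset.mem_singleton] at hp'
            subst hp'
            exact ⟨⟨Finset.mem_univ _, hab.symm⟩, Sym2.eq_swap⟩
      rw [this]
      rw [Finset.card_insert_of_notMem, Finset.card_singleton]
      rw [Finset.mem_singleton]
      intro hh
      exact hne (congrArg Prod.fst hh)

lemma A_le (G : (Q n).Subgraph) (d : ℕ) : A G d n ≤ (VT G).card * (d - 1) := by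
  rw [A]
  calc ∑ u ∈ VT G, F G d n u ≤ ∑ _u ∈ VT G, (d - 1) :=
        Finset.sum_le_sum fun u _ => min_le_right _ _
    _ = (VT G).card * (d - 1) := by rw [Finset.sum_const, smul_eq_mul]



noncomputable def Phi (G : (Q n).Subgraph) (d : ℕ) :
    (Fin n → Bool) × (Fin n → Bool) → Σ u : Fin n → Bool, Σ v : Fin n → Bool, (Q n).Walk u v :=
  fun p =>
    if h : 0 < d ∧ G.Adj p.1 p.2 ∧ d - 1 ≤ f G (dir p.1 p.2) p.1 then
      (exists_geo h.1 h.2.1 h.2.2).choose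
    else ⟨fun _ => false, fun _ => false, SimpleGraph.Walk.nil⟩

lemma Phi_spec {G : (Q n).Subgraph} {d : ℕ} (hd : 0 < d)
    {p : (Fin n → Bool) × (Fin n → Bool)}
    (hp : G.Adj p.1 p.2 ∧ d - 1 ≤ f G (dir p.1 p.2) p.1) :
    ((Phi G d p).2.2.toSubgraph ≤ G ∧ IsIncGeodesic (Phi G d p).2.2 ∧
      (Phi G d p).2.2.length = d) ∧
      (Phi G d p).2.2.darts.getLast?.map (fun dd => (dd.fst, dd.snd)) = some p := by
  have hfull : 0 < d ∧ G.Adj p.1 p.2 ∧ d - 1 ≤ f G (dir p.1 p.2) p.1 := ⟨hd, hp⟩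
  have hs := (exists_geo hfull.1 hfull.2.1 hfull.2.2).choose_spec
  rw [Phi, dif_pos hfull]
  exact ⟨hs.1, hs.2⟩
end Stmt3Aux

open Stmt3Aux in
/-- If `G` is a subgraph of `Q n` with average degree at least `d ∈ ℕ`, `d > 0`, then
`G` contains at least `|G|` increasing geodesics of length `d`.  (An increasing
geodesic has a canonical orientation, so oriented counting is the natural one.) -/
theorem stmt3 (n d : ℕ) (hd : 0 < d) (G : (Q n).Subgraph)
    (havg : (d : ℝ) * G.verts.ncard ≤ 2 * G.edgeSet.ncard) :
    G.verts.ncard ≤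
      {q : Σ u : Fin n → Bool, Σ v : Fin n → Bool, (Q n).Walk u v |
        q.2.2.toSubgraph ≤ G ∧ IsIncGeodesic q.2.2 ∧ q.2.2.length = d}.ncard := by
  classical
  have hVc : G.verts.ncard = (VT G).card := Set.ncard_eq_toFinset_card' _
  have hE : d * G.verts.ncard ≤ 2 * G.edgeSet.ncard := by exact_mod_cast havg
  have hGK := GK G d n
  have hOP := OP_card G
  have hBc := B_card G d
  have h2E := two_E G
  have hA := A_le G d
  have hBV : (VT G).card ≤ (B G d).card := by
    obtain ⟨d', rfl⟩ : ∃ d', d = d' + 1 := ⟨d - 1, (Nat.succ_pred_eq_of_pos hd).symm⟩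
    rw [Nat.add_sub_cancel] at hA
    have hsplit : (d' + 1) * (VT G).card = (VT G).card * d' + (VT G).card := by ring
    rw [hVc] at hE
    omega
  have hTfin : ({q : Σ u : Fin n → Bool, Σ v : Fin n → Bool, (Q n).Walk u v |
      q.2.2.toSubgraph ≤ G ∧ IsIncGeodesic q.2.2 ∧ q.2.2.length = d}).Finite := by
    have hsub : ({q : Σ u : Fin n → Bool, Σ v : Fin n → Bool, (Q n).Walk u v |
        q.2.2.toSubgraph ≤ G ∧ IsIncGeodesic q.2.2 ∧ q.2.2.length = d}) ⊆
        Set.range (fun x : (Σ u : Fin n → Bool, Σ v : Fin n → Bool,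
        {p : (Q n).Walk u v // p.length = d}) =>
        (⟨x.1, x.2.1, x.2.2.1⟩ : Σ u : Fin n → Bool, Σ v : Fin n → Bool, (Q n).Walk u v)) := by
      rintro ⟨u, v, p⟩ hq
      exact ⟨⟨u, v, ⟨p, hq.2.2⟩⟩, rfl⟩
    exact (Set.finite_range _).subset hsub
  have hinj : Set.InjOn (Phi G d) (B G d : Set ((Fin n → Bool) × (Fin n → Bool))) := by
    intro p hp q hq heq
    rw [Finset.mem_coe, B, Finset.mem_filter] at hp hq
    have h1 := (Phi_spec hd hp.2).2
    have h2 := (Phi_spec hd hq.2).2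
    rw [heq, h2] at h1
    exact (Option.some.inj h1).symm
  have hmaps : ∀ p ∈ (B G d : Set ((Fin n → Bool) × (Fin n → Bool))), Phi G d p ∈
      ({q : Σ u : Fin n → Bool, Σ v : Fin n → Bool, (Q n).Walk u v |
        q.2.2.toSubgraph ≤ G ∧ IsIncGeodesic q.2.2 ∧ q.2.2.length = d}) := by
    intro p hp
    rw [Finset.mem_coe, B, Finset.mem_filter] at hp
    exact (Phi_spec hd hp.2).1
  have hcard := Set.ncard_le_ncard_of_injOn (Phi G d) hmaps hinj hTfin
  rw [Set.ncard_coe_finset] at hcard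
  rw [hVc]
  exact le_trans hBV hcard
end

section
/- Let A ⊆ P([n]) be a set family, let G be the induced subgraph of Q_n on A, and let i ∈ [n]. If G has average degree at least d and every two vertices of G are at Hamming distance less than k, then the induced subgraph G' of Q_n on the down-compressed family C_i(A) also has average degree at least d and all pairs of its vertices are at Hamming distance less than k. -/
open Finset
open scoped symmDiff

private lemma sd_erase {n : ℕ} (A B : Finset (Fin n)) (i : Fin n) :
    (A.erase i) ∆ (B.erase i) = (A ∆ B).erase i := by
  ext j
  simp only [Finset.mem_symmDiff, Finset.mem_erase]
  tauto

private lemma insert_sd {n : ℕ} {A B : Finset (Fin n)} {i : Fin n}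
    (hA : i ∉ A) (hB : i ∉ B) : (insert i A) ∆ (insert i B) = A ∆ B := by
  ext j
  simp only [Finset.mem_symmDiff, Finset.mem_insert]
  by_cases hj : j = i <;> simp [hj, hA, hB]

private lemma erase_sd_insert {n : ℕ} {A B : Finset (Fin n)} {i : Fin n}
    (hA : i ∈ A) (hB : i ∉ B) : (A.erase i) ∆ (insert i B) = A ∆ B := by
  ext j
  simp only [Finset.mem_symmDiff, Finset.mem_erase, Finset.mem_insert]
  by_cases hj : j = i <;> simp [hj, hA, hB]

private lemma sd_subset_sd_insert {n : ℕ} {A B : Finset (Fin n)} {i : Fin n}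
    (hA : i ∉ A) (hB : i ∉ B) : A ∆ B ⊆ A ∆ insert i B := by
  intro j hj
  simp only [Finset.mem_symmDiff, Finset.mem_insert] at *
  have hji : j ≠ i := by rintro rfl; tauto
  tauto

private lemma eq_erase_of_sd {n : ℕ} {A B : Finset (Fin n)} {i : Fin n}
    (hiA : i ∈ A) (hiB : i ∉ B) (h : (A ∆ B).card = 1) : B = A.erase i := by
  obtain ⟨a, ha⟩ := Finset.card_eq_one.1 h
  have hi : i ∈ A ∆ B := by simp [Finset.mem_symmDiff]; tauto
  rw [ha, Finset.mem_singleton] at hi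
  subst hi
  have key : ∀ j : Fin n, (j ∈ A ∧ j ∉ B ∨ j ∈ B ∧ j ∉ A) ↔ j = i := by
    intro j
    rw [← Finset.mem_symmDiff, ha, Finset.mem_singleton]
  ext j
  simp only [Finset.mem_erase]
  specialize key j
  constructor
  · intro hjB
    have hji : j ≠ i := by rintro rfl; exact hiB hjB
    refine ⟨hji, ?_⟩
    by_contra hjA
    exact hji (key.1 (Or.inr ⟨hjB, hjA⟩))
  · rintro ⟨hji, hjA⟩
    by_contra hjB
    exact hji (key.1 (Or.inl ⟨hjA, hjB⟩))

/-- Compression preserves average degree and small diameter: if the subgraph of `Q n`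
induced on a family `𝒜` of subsets of `[n]` has average degree at least `d` (stated via
ordered adjacent pairs: `2|E| ≥ d|𝒜|`) and all pairs of its vertices are at Hamming
distance (= size of symmetric difference) less than `k`, then the same holds for the
subgraph induced on the down-compressed family `C_i(𝒜)`. -/
theorem stmt6 (n : ℕ) (𝒜 : Finset (Finset (Fin n))) (i : Fin n) (d : ℝ) (k : ℕ)
    (havg : d * (𝒜.card : ℝ) ≤
      (((𝒜 ×ˢ 𝒜).filter fun p => (p.1 ∆ p.2).card = 1).card : ℝ))
    (hdist : ∀ A ∈ 𝒜, ∀ B ∈ 𝒜, (A ∆ B).card < k) :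
    (d * ((Down.compression i 𝒜).card : ℝ) ≤
      ((((Down.compression i 𝒜) ×ˢ (Down.compression i 𝒜)).filter
        fun p => (p.1 ∆ p.2).card = 1).card : ℝ)) ∧
    ∀ A ∈ Down.compression i 𝒜, ∀ B ∈ Down.compression i 𝒜, (A ∆ B).card < k := by
  constructor
  · -- edge count
    set 𝒞 := Down.compression i 𝒜 with h𝒞
    have hmem : ∀ S : Finset (Fin n),
        S ∈ 𝒞 ↔ S ∈ 𝒜 ∧ S.erase i ∈ 𝒜 ∨ S ∉ 𝒜 ∧ insert i S ∈ 𝒜 := fun S =>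
      Down.mem_compression
    have hcard : (𝒞.card : ℝ) = (𝒜.card : ℝ) := by
      rw [h𝒞, Down.card_compression]
    rw [hcard]
    refine havg.trans (Nat.cast_le.2 ?_)
    set φ : Finset (Fin n) × Finset (Fin n) → Finset (Fin n) × Finset (Fin n) :=
      fun p => if i ∈ p.1 ∧ i ∈ p.2 ∧ ¬(p.1.erase i ∈ 𝒜 ∧ p.2.erase i ∈ 𝒜)
        then (p.1.erase i, p.2.erase i) else p with hφ
    apply Finset.card_le_card_of_injOn φ
    · rintro ⟨A, B⟩ hp
      rw [Finset.mem_coe] at hp ⊢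
      simp only [Finset.mem_filter, Finset.mem_product] at hp
      obtain ⟨⟨hA, hB⟩, hsd⟩ := hp
      simp only [hφ]
      split_ifs with h
      · obtain ⟨hiA, hiB, hne⟩ := h
        simp only [Finset.mem_filter, Finset.mem_product]
        refine ⟨⟨?_, ?_⟩, ?_⟩
        · rw [hmem]
          by_cases he : A.erase i ∈ 𝒜
          · exact Or.inl ⟨he, by rw [Finset.erase_idem]; exact he⟩
          · exact Or.inr ⟨he, by rw [Finset.insert_erase hiA]; exact hA⟩
        · rw [hmem]
          by_cases he : B.erase i ∈ 𝒜
          · exact Or.inl ⟨he, by rw [Finset.erase_idem]; exact he⟩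
          · exact Or.inr ⟨he, by rw [Finset.insert_erase hiB]; exact hB⟩
        · have hni : i ∉ A ∆ B := by
            simp [Finset.mem_symmDiff, hiA, hiB]
          rw [sd_erase, Finset.erase_eq_of_notMem hni]
          exact hsd
      · push_neg at h
        simp only [Finset.mem_filter, Finset.mem_product]
        refine ⟨⟨?_, ?_⟩, hsd⟩
        · rw [hmem]
          by_cases hiA : i ∈ A
          · by_cases hiB : i ∈ B
            · exact Or.inl ⟨hA, (h hiA hiB).1⟩
            · -- A ∆ B = {i}, so B = A.erase i ∈ 𝒜
              have := eq_erase_of_sd hiA hiB hsd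
              exact Or.inl ⟨hA, this ▸ hB⟩
          · exact Or.inl ⟨hA, by rw [Finset.erase_eq_of_notMem hiA]; exact hA⟩
        · rw [hmem]
          by_cases hiB : i ∈ B
          · by_cases hiA : i ∈ A
            · exact Or.inl ⟨hB, (h hiA hiB).2⟩
            · have := eq_erase_of_sd hiB hiA (by rwa [symmDiff_comm])
              exact Or.inl ⟨hB, this ▸ hA⟩
          · exact Or.inl ⟨hB, by rw [Finset.erase_eq_of_notMem hiB]; exact hB⟩
    · rintro ⟨A, B⟩ hp ⟨A', B'⟩ hq heq
      simp only [Finset.coe_filter, Set.mem_setOf_eq, Finset.mem_coe,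
        Finset.mem_product] at hp hq
      simp only [hφ] at heq
      split_ifs at heq with h1 h2 h2
      · have e1 : A.erase i = A'.erase i := congrArg Prod.fst heq
        have e2 : B.erase i = B'.erase i := congrArg Prod.snd heq
        have hA : A = A' := by
          rw [← Finset.insert_erase h1.1, ← Finset.insert_erase h2.1, e1]
        have hB : B = B' := by
          rw [← Finset.insert_erase h1.2.1, ← Finset.insert_erase h2.2.1, e2]
        simp [hA, hB]
      · exfalso
        have e1 : A.erase i = A' := congrArg Prod.fst heq
        have e2 : B.erase i = B' := congrArg Prod.snd heq
        exact h1.2.2 ⟨by rw [e1]; exact hq.1.1, by rw [e2]; exact hq.1.2⟩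
      · exfalso
        have e1 : A = A'.erase i := congrArg Prod.fst heq
        have e2 : B = B'.erase i := congrArg Prod.snd heq
        exact h2.2.2 ⟨by rw [← e1]; exact hp.1.1, by rw [← e2]; exact hp.1.2⟩
      · exact heq
  · -- diameter
    intro A hA B hB
    rw [Down.mem_compression] at hA hB
    rcases hA with ⟨hA1, hA2⟩ | ⟨hA1, hA2⟩ <;> rcases hB with ⟨hB1, hB2⟩ | ⟨hB1, hB2⟩
    · exact hdist _ hA1 _ hB1
    · have hiB : i ∉ B := fun h => hB1 (by rwa [Finset.insert_eq_self.2 h] at hB2)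
      by_cases hiA : i ∈ A
      · have := hdist _ hA2 _ hB2
        rwa [erase_sd_insert hiA hiB] at this
      · have := hdist _ hA1 _ hB2
        exact lt_of_le_of_lt (Finset.card_le_card (sd_subset_sd_insert hiA hiB)) this
    · have hiA : i ∉ A := fun h => hA1 (by rwa [Finset.insert_eq_self.2 h] at hA2)
      by_cases hiB : i ∈ B
      · have := hdist _ hB2 _ hA2
        rw [erase_sd_insert hiB hiA] at this
        rwa [symmDiff_comm]
      · have := hdist _ hB1 _ hA2
        rw [symmDiff_comm]
        exact lt_of_le_of_lt (Finset.card_le_card (sd_subset_sd_insert hiB hiA)) this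
    · have hiA : i ∉ A := fun h => hA1 (by rwa [Finset.insert_eq_self.2 h] at hA2)
      have hiB : i ∉ B := fun h => hB1 (by rwa [Finset.insert_eq_self.2 h] at hB2)
      have := hdist _ hA2 _ hB2
      rwa [insert_sd hiA hiB] at this
end

section
/- (Katona) Let k, t be positive integers and let A ⊆ [n]^(k) be a t-intersecting family of k-element subsets of [n]. Then |∂^(t)(A)| ≥ |A|, where ∂^(t) denotes the t-fold iterated shadow. -/
open Finset
open scoped symmDiff FinsetFamily

namespace KatonaAux

variable {n : ℕ}

/-- The initial segment `{0, ..., m-1}` of `Fin n`. -/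
def seg (n m : ℕ) : Finset (Fin n) := univ.filter (fun x => (x : ℕ) < m)

lemma mem_seg {m : ℕ} {x : Fin n} : x ∈ seg n m ↔ (x : ℕ) < m := by
  simp [seg]

lemma seg_mono {m m' : ℕ} (h : m ≤ m') : seg n m ⊆ seg n m' := fun x hx => by
  rw [mem_seg] at hx ⊢; omega

lemma card_seg (m : ℕ) : (seg n m).card = min m n := by
  rcases le_total n m with h | h
  · have : seg n m = univ := by
      ext x; simpa [mem_seg] using lt_of_lt_of_le x.isLt h
    simp [this, card_univ, Nat.min_eq_right h]
  · have : seg n m = (Finset.range m).attachFin (fun a ha => lt_of_lt_of_le (mem_range.1 ha) h) := by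
      ext x; simp [mem_seg, Finset.mem_attachFin]
    rw [this, Finset.card_attachFin, card_range, Nat.min_eq_left h]

lemma cnt_mono (A : Finset (Fin n)) {m m' : ℕ} (h : m ≤ m') :
    (A ∩ seg n m).card ≤ (A ∩ seg n m').card :=
  card_le_card (inter_subset_inter subset_rfl (seg_mono h))

lemma cnt_le (A : Finset (Fin n)) (m : ℕ) : (A ∩ seg n m).card ≤ min m n :=
  (card_seg m) ▸ card_le_card inter_subset_right

lemma cnt_le_card (A : Finset (Fin n)) (m : ℕ) : (A ∩ seg n m).card ≤ A.card :=
  card_le_card inter_subset_left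

lemma cnt_succ_le (A : Finset (Fin n)) (m : ℕ) :
    (A ∩ seg n (m + 1)).card ≤ (A ∩ seg n m).card + 1 := by
  classical
  have hsub : A ∩ seg n (m + 1) ⊆ (A ∩ seg n m) ∪ (univ.filter (fun x : Fin n => (x : ℕ) = m)) := by
    intro x hx
    rw [mem_inter, mem_seg] at hx
    rw [mem_union, mem_inter, mem_seg, mem_filter]
    rcases Nat.lt_succ_iff_lt_or_eq.1 hx.2 with h | h
    · exact Or.inl ⟨hx.1, h⟩
    · exact Or.inr ⟨mem_univ _, h⟩
  have h1 : (univ.filter (fun x : Fin n => (x : ℕ) = m)).card ≤ 1 := by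
    apply card_le_one.2
    intro a ha b hb
    rw [mem_filter] at ha hb
    exact Fin.ext (ha.2.trans hb.2.symm)
  calc (A ∩ seg n (m + 1)).card ≤ _ := card_le_card hsub
    _ ≤ (A ∩ seg n m).card + 1 := le_trans (card_union_le _ _) (by omega)

lemma cnt_eq_of_le (A : Finset (Fin n)) {m : ℕ} (h : n ≤ m) : A ∩ seg n m = A := by
  ext x; simp only [mem_inter, mem_seg, and_iff_left_iff_imp]
  exact fun _ => lt_of_lt_of_le x.isLt h

/-- Elements of `A` outside `seg n m` have values in `[m, n)`. -/
lemma card_le_cnt_add (A : Finset (Fin n)) (m : ℕ) :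
    A.card ≤ (A ∩ seg n m).card + (n - m) := by
  classical
  have h1 : A \ (A ∩ seg n m) ⊆ univ \ seg n m := by
    intro x hx
    rw [mem_sdiff] at hx ⊢
    refine ⟨mem_univ _, fun hm => hx.2 (mem_inter.2 ⟨hx.1, hm⟩)⟩
  have h2 : (univ \ seg n m).card = n - min m n := by
    rw [card_sdiff_of_subset (subset_univ _), card_seg, card_univ, Fintype.card_fin]
  have h3 := card_le_card h1
  have h4 := card_sdiff_add_card_eq_card (inter_subset_left (s₁ := A) (s₂ := seg n m))
  rw [Nat.min_def] at h2
  split at h2 <;> omega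

/-- `cnt` at `v+1` versus at `v`, where `x` is the element of value `v`. -/
lemma cnt_succ_mem (A : Finset (Fin n)) (x : Fin n) :
    (A ∩ seg n ((x : ℕ) + 1)).card = (A ∩ seg n (x : ℕ)).card + (if x ∈ A then 1 else 0) := by
  classical
  have : A ∩ seg n ((x : ℕ) + 1) = (A ∩ seg n (x : ℕ)) ∪ (A ∩ {x}) := by
    ext y
    simp only [mem_inter, mem_seg, mem_union, mem_singleton]
    constructor
    · rintro ⟨hy, hlt⟩
      rcases Nat.lt_succ_iff_lt_or_eq.1 hlt with h | h
      · exact Or.inl ⟨hy, h⟩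
      · exact Or.inr ⟨hy, Fin.ext h⟩
    · rintro (⟨hy, hlt⟩ | ⟨hy, rfl⟩)
      · exact ⟨hy, by omega⟩
      · exact ⟨hy, Nat.lt_succ_self _⟩
  rw [this, card_union_of_disjoint]
  · congr 1
    by_cases hx : x ∈ A <;> simp [hx]
  · rw [disjoint_right]
    rintro y hy
    rw [mem_inter, mem_singleton] at hy
    rcases hy with ⟨-, rfl⟩
    rw [mem_inter, mem_seg]
    rintro ⟨-, h⟩; omega

/-- Two sets with equal counts everywhere are equal. -/
lemma eq_of_cnt_eq {A B : Finset (Fin n)}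
    (h : ∀ m, (A ∩ seg n m).card = (B ∩ seg n m).card) : A = B := by
  ext x
  have h1 := cnt_succ_mem A x
  have h2 := cnt_succ_mem B x
  have h3 := h ((x : ℕ) + 1)
  have h4 := h (x : ℕ)
  by_cases hA : x ∈ A <;> by_cases hB : x ∈ B <;> simp [hA, hB] at h1 h2 ⊢ <;> omega

/-- A family is shifted if it is closed under replacing an element by a smaller one. -/
def Shifted (𝒜 : Finset (Finset (Fin n))) : Prop :=
  ∀ A ∈ 𝒜, ∀ j ∈ A, ∀ i : Fin n, i < j → i ∉ A → insert i (A.erase j) ∈ 𝒜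

/-- Key step for domination closure: if `B` strictly dominates `A ∈ 𝒜`, we can move `A`
one step towards `B`, strictly decreasing the weight. -/
lemma dominated_step {𝒜 : Finset (Finset (Fin n))} (h𝒜 : Shifted 𝒜)
    {A B : Finset (Fin n)} (hA : A ∈ 𝒜) (hcard : B.card = A.card)
    (hdom : ∀ m, (A ∩ seg n m).card ≤ (B ∩ seg n m).card) (hne : A ≠ B) :
    ∃ A' ∈ 𝒜, A'.card = A.card ∧ (∑ x ∈ A', (x : ℕ)) < ∑ x ∈ A, (x : ℕ) ∧
      (∀ m, (A' ∩ seg n m).card ≤ (B ∩ seg n m).card) := by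
  classical
  -- find minimal m where counts differ
  have hex : ∃ m, (A ∩ seg n m).card < (B ∩ seg n m).card := by
    by_contra h
    push_neg at h
    exact hne (eq_of_cnt_eq fun m => le_antisymm (hdom m) (h m))
  set m := Nat.find hex with hm
  have hmspec : (A ∩ seg n m).card < (B ∩ seg n m).card := Nat.find_spec hex
  have hmpos : 0 < m := by
    rcases Nat.eq_zero_or_pos m with h | h
    · exfalso
      have : seg n 0 = ∅ := by ext x; simp [mem_seg]
      rw [h, this] at hmspec; simp at hmspec
    · exact h
  have hmin : (A ∩ seg n (m - 1)).card = (B ∩ seg n (m - 1)).card :=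
    le_antisymm (hdom _) (le_of_not_gt (Nat.find_min hex (by omega)))
  -- the element b of value m-1 is in B but not in A
  have hBb : ∃ b : Fin n, (b : ℕ) = m - 1 ∧ b ∈ B := by
    by_contra h
    push_neg at h
    have : B ∩ seg n m ⊆ B ∩ seg n (m - 1) := by
      intro x hx
      rw [mem_inter, mem_seg] at hx ⊢
      refine ⟨hx.1, ?_⟩
      rcases Nat.lt_or_ge (x : ℕ) (m - 1) with h' | h'
      · exact h'
      · exact absurd hx.1 (h x (by omega))
    have := card_le_card this
    have := cnt_mono A (show m - 1 ≤ m by omega)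
    omega
  obtain ⟨b, hbval, hbB⟩ := hBb
  have hbA : b ∉ A := by
    intro hbA
    have h1 : (A ∩ seg n m).card = (A ∩ seg n (m-1)).card + 1 := by
      have := cnt_succ_mem A b
      rw [hbval] at this
      simp only [hbA, if_true] at this
      rwa [show m - 1 + 1 = m by omega] at this
    have h2 : (B ∩ seg n m).card ≤ (B ∩ seg n (m-1)).card + 1 := by
      have := cnt_succ_le B (m - 1)
      rwa [show m - 1 + 1 = m by omega] at this
    omega
  -- a : minimal element of A with value ≥ m-1
  have hAne : (A.filter (fun x : Fin n => m - 1 ≤ (x : ℕ))).Nonempty := by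
    rw [filter_nonempty_iff]
    by_contra h
    push_neg at h
    have hsub : A ⊆ A ∩ seg n (m - 1) := by
      intro x hx
      rw [mem_inter, mem_seg]
      exact ⟨hx, by have := h x hx; omega⟩
    have h1 := card_le_card hsub
    have h2 : (B ∩ seg n (m-1)).card < B.card := by
      apply card_lt_card
      rw [ssubset_iff_of_subset inter_subset_left]
      exact ⟨b, hbB, fun hb => by rw [mem_inter, mem_seg] at hb; omega⟩
    have h3 := cnt_le_card A (m-1)
    omega
  set a := (A.filter (fun x : Fin n => m - 1 ≤ (x : ℕ))).min' hAne with ha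
  have haA : a ∈ A ∧ m - 1 ≤ (a : ℕ) := by
    have := (A.filter (fun x : Fin n => m - 1 ≤ (x : ℕ))).min'_mem hAne
    rwa [mem_filter] at this
  have hamin : ∀ x ∈ A, m - 1 ≤ (x : ℕ) → a ≤ x := by
    intro x hx hx'
    exact min'_le _ _ (mem_filter.2 ⟨hx, hx'⟩)
  have haval : m - 1 < (a : ℕ) := by
    rcases Nat.lt_or_ge (m-1) (a : ℕ) with h | h
    · exact h
    · exfalso
      have : a = b := Fin.ext (by omega)
      exact hbA (this ▸ haA.1)
  have hba : b < a := by
    rw [Fin.lt_def]; omega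
  refine ⟨insert b (A.erase a), h𝒜 A hA a haA.1 b hba hbA, ?_, ?_, ?_⟩
  · rw [card_insert_of_notMem (fun h => hbA (mem_of_mem_erase h)),
      card_erase_of_mem haA.1]
    have : 0 < A.card := card_pos.2 ⟨a, haA.1⟩
    omega
  · rw [sum_insert (fun h => hbA (mem_of_mem_erase h))]
    have h1 : (∑ x ∈ A.erase a, (x : ℕ)) + (a : ℕ) = ∑ x ∈ A, (x : ℕ) :=
      Finset.sum_erase_add A _ haA.1
    omega
  · intro m'
    have hkey : ((insert b (A.erase a)) ∩ seg n m').card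
        = (A ∩ seg n m').card + (if (b:ℕ) < m' then 1 else 0) - (if (a:ℕ) < m' then 1 else 0) := by
      have hsplit : (insert b (A.erase a)) ∩ seg n m'
          = (if (b:ℕ) < m' then {b} else ∅) ∪ ((A ∩ seg n m').erase a) := by
        ext x
        simp only [mem_inter, mem_insert, mem_erase, mem_seg, mem_union]
        split_ifs with hb
        · simp only [mem_singleton]
          constructor
          · rintro ⟨h1 | h1, h2⟩
            · exact Or.inl h1
            · exact Or.inr ⟨h1.1, h1.2, h2⟩
          · rintro (rfl | ⟨h1, h2, h3⟩)
            · exact ⟨Or.inl rfl, hb⟩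
            · exact ⟨Or.inr ⟨h1, h2⟩, h3⟩
        · simp only [notMem_empty, false_or]
          constructor
          · rintro ⟨h1 | h1, h2⟩
            · subst h1; omega
            · exact ⟨h1.1, h1.2, h2⟩
          · rintro ⟨h1, h2, h3⟩
            exact ⟨Or.inr ⟨h1, h2⟩, h3⟩
      rw [hsplit, card_union_of_disjoint]
      · have hbne : b ∉ A ∩ seg n m' := fun h => hbA (mem_inter.1 h).1
        split_ifs with hb hach hach2
        · rw [card_erase_of_mem (by rw [mem_inter, mem_seg]; exact ⟨haA.1, hach⟩)]
          have : 0 < (A ∩ seg n m').card := card_pos.2 ⟨a, by rw [mem_inter, mem_seg]; exact ⟨haA.1, hach⟩⟩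
          simp only [card_singleton]
          omega
        · rw [erase_eq_of_notMem (by rw [mem_inter, mem_seg]; exact fun h => hach (h.2 : _))]
          simp only [card_singleton, card_empty]
          omega
        · rw [card_erase_of_mem (by rw [mem_inter, mem_seg]; exact ⟨haA.1, hach2⟩)]
          simp only [card_empty]
          omega
        · rw [erase_eq_of_notMem (by rw [mem_inter, mem_seg]; exact fun h => hach2 (h.2 : _))]
          simp only [card_empty]
          omega
      · split_ifs with hb
        · rw [disjoint_left]
          rintro x hx
          rw [mem_singleton] at hx
          subst hx
          rw [mem_erase, mem_inter]
          rintro ⟨-, h, -⟩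
          exact hbA h
        · exact disjoint_empty_left _
    rw [hkey]
    have hba' : (b : ℕ) < (a : ℕ) := hba
    split_ifs with hb hach hach2
    · have := hdom m'
      omega
    · -- b < m' ≤ a : no elements of A with value in [m-1, m')
      have hAeq : A ∩ seg n m' ⊆ A ∩ seg n (m-1) := by
        intro x hx
        rw [mem_inter, mem_seg] at hx ⊢
        refine ⟨hx.1, ?_⟩
        by_contra h
        push_neg at h
        have := hamin x hx.1 (by omega)
        rw [Fin.le_def] at this
        omega
      have h1 := card_le_card hAeq
      have h2 := cnt_mono B (show m ≤ m' by omega)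
      have h3 := cnt_mono A (show m - 1 ≤ m by omega)
      omega
    · exfalso; omega
    · have := hdom m'
      omega

/-- A shifted family is closed under domination. -/
lemma mem_of_dominated {𝒜 : Finset (Finset (Fin n))} (h𝒜 : Shifted 𝒜) :
    ∀ (w : ℕ) (A B : Finset (Fin n)), A ∈ 𝒜 → (∑ x ∈ A, (x : ℕ)) ≤ w →
    B.card = A.card → (∀ m, (A ∩ seg n m).card ≤ (B ∩ seg n m).card) → B ∈ 𝒜 := by
  classical
  intro w
  induction w with
  | zero =>
    intro A B hA hw hcard hdom
    by_cases hne : A = B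
    · exact hne ▸ hA
    · obtain ⟨A', -, -, hlt, -⟩ := dominated_step h𝒜 hA hcard hdom hne
      omega
  | succ w ih =>
    intro A B hA hw hcard hdom
    by_cases hne : A = B
    · exact hne ▸ hA
    · obtain ⟨A', hA', hcard', hlt, hdom'⟩ := dominated_step h𝒜 hA hcard hdom hne
      exact ih A' B hA' (by omega) (hcard ▸ hcard'.symm ▸ rfl) hdom'

/-- From any finset one can extract an "initial segment" of any smaller size. -/
lemma exists_initial (S : Finset (Fin n)) :
    ∀ r ≤ S.card, ∃ T ⊆ S, T.card = r ∧
      ∀ m, (T ∩ seg n m).card = min r ((S ∩ seg n m).card) := by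
  classical
  intro r
  induction r with
  | zero => exact fun _ => ⟨∅, empty_subset _, card_empty, fun m => by simp⟩
  | succ r ih =>
    intro hr
    obtain ⟨T, hTS, hTcard, hTcnt⟩ := ih (by omega)
    have hne : (S \ T).Nonempty := by
      rw [sdiff_nonempty]
      intro h
      have := card_le_card h
      omega
    set x := (S \ T).min' hne with hx
    have hxmem : x ∈ S ∧ x ∉ T := by
      have := (S \ T).min'_mem hne
      rwa [mem_sdiff] at this
    have hxmin : ∀ y ∈ S, y ∉ T → x ≤ y := fun y h1 h2 => min'_le _ _ (mem_sdiff.2 ⟨h1, h2⟩)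
    refine ⟨insert x T, insert_subset hxmem.1 hTS, by
      rw [card_insert_of_notMem hxmem.2, hTcard], fun m => ?_⟩
    by_cases hxm : (x : ℕ) < m
    · have h1 : (insert x T) ∩ seg n m = insert x (T ∩ seg n m) := by
        ext y
        simp only [mem_inter, mem_insert, mem_seg]
        constructor
        · rintro ⟨rfl | h, h2⟩
          · exact Or.inl rfl
          · exact Or.inr ⟨h, h2⟩
        · rintro (rfl | ⟨h, h2⟩)
          · exact ⟨Or.inl rfl, hxm⟩
          · exact ⟨Or.inr h, h2⟩
      have h2 : x ∉ T ∩ seg n m := fun h => hxmem.2 (mem_inter.1 h).1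
      rw [h1, card_insert_of_notMem h2, hTcnt m]
      have h3 : insert x (T ∩ seg n m) ⊆ S ∩ seg n m := by
        rw [← h1]
        exact inter_subset_inter (insert_subset hxmem.1 hTS) subset_rfl
      have h4 := card_le_card h3
      rw [card_insert_of_notMem h2, hTcnt m] at h4
      omega
    · -- all of S below m is in T
      have h1 : S ∩ seg n m ⊆ T := by
        intro y hy
        rw [mem_inter, mem_seg] at hy
        by_contra h
        have := hxmin y hy.1 h
        rw [Fin.le_def] at this
        omega
      have h2 : S ∩ seg n m ⊆ T ∩ seg n m := fun y hy =>
        mem_inter.2 ⟨h1 hy, (mem_inter.1 hy).2⟩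
      have h3 : T ∩ seg n m ⊆ S ∩ seg n m := inter_subset_inter hTS subset_rfl
      have h4 : (T ∩ seg n m).card = (S ∩ seg n m).card :=
        le_antisymm (card_le_card h3) (card_le_card h2)
      have h5 : (S ∩ seg n m).card ≤ r := by
        have := h4 ▸ (card_le_card (h3.trans (inter_subset_left))) -- not needed really
        have h6 : (T ∩ seg n m).card ≤ T.card := card_le_card inter_subset_left
        omega
      have h7 : (insert x T) ∩ seg n m = T ∩ seg n m := by
        ext y
        simp only [mem_inter, mem_insert, mem_seg]
        constructor
        · rintro ⟨rfl | h, h2⟩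
          · omega
          · exact ⟨h, h2⟩
        · rintro ⟨h, h2⟩
          exact ⟨Or.inr h, h2⟩
      rw [h7, h4]
      omega

/-- Katona's key lemma: in a shifted `t`-intersecting family of `k`-sets, every member `A`
has some `j ∈ [t,k]` with at least `j` elements below `2j - t`. -/
lemma exists_good_j {𝒜 : Finset (Finset (Fin n))} {k t : ℕ} (h𝒜 : Shifted 𝒜)
    (hcard : ∀ A ∈ 𝒜, A.card = k) (hint : ∀ A ∈ 𝒜, ∀ B ∈ 𝒜, t ≤ (A ∩ B).card)
    (ht : 0 < t) {A : Finset (Fin n)} (hA : A ∈ 𝒜) :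
    ∃ j, t ≤ j ∧ j ≤ (A ∩ seg n (2 * j - t)).card := by
  classical
  by_contra hcon
  push_neg at hcon
  have hkA : A.card = k := hcard A hA
  have htk : t ≤ k := by
    have := hint A hA A hA
    rwa [inter_self, hkA] at this
  have hnk : 2 * k - t < n := by
    have h1 := hcon k htk
    have h2 : ¬ A ⊆ seg n (2 * k - t) := fun h => by
      rw [inter_eq_left.2 h, hkA] at h1; omega
    obtain ⟨a, haA, ha⟩ := not_subset.1 h2
    rw [mem_seg] at ha
    have := a.isLt
    omega
  obtain ⟨T, hTA, hTcard, hTcnt⟩ := exists_initial A (t - 1) (by omega)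
  have hcompl : k - t + 1 ≤ Aᶜ.card := by
    rw [card_compl, Fintype.card_fin, hkA]; omega
  obtain ⟨C, hCA, hCcard, hCcnt⟩ := exists_initial Aᶜ (k - t + 1) hcompl
  have hdisj : Disjoint T C := by
    rw [disjoint_left]
    intro x hx hxc
    exact (mem_compl.1 (hCA hxc)) (hTA hx)
  have hBcard : (T ∪ C).card = k := by
    rw [card_union_of_disjoint hdisj, hTcard, hCcard]; omega
  have hBmem : T ∪ C ∈ 𝒜 := by
    apply mem_of_dominated h𝒜 (∑ x ∈ A, (x : ℕ)) A (T ∪ C) hA le_rfl (by rw [hBcard, hkA])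
    intro m
    have hsplit : (T ∪ C) ∩ seg n m = (T ∩ seg n m) ∪ (C ∩ seg n m) :=
      union_inter_distrib_right T C (seg n m)
    have hd2 : Disjoint (T ∩ seg n m) (C ∩ seg n m) :=
      hdisj.mono inter_subset_left inter_subset_left
    have hcntB : ((T ∪ C) ∩ seg n m).card = min (t-1) ((A ∩ seg n m).card)
        + min (k-t+1) ((Aᶜ ∩ seg n m).card) := by
      rw [hsplit, card_union_of_disjoint hd2, hTcnt m, hCcnt m]
    have hAc : (Aᶜ ∩ seg n m).card + (A ∩ seg n m).card = min m n := by
      have h1 : Aᶜ ∩ seg n m = seg n m \ (A ∩ seg n m) := by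
        ext x
        simp only [mem_inter, mem_compl, mem_sdiff, mem_seg]
        tauto
      rw [h1, card_sdiff_of_subset inter_subset_right, card_seg]
      have := cnt_le A m
      omega
    rw [hcntB]
    set c := (A ∩ seg n m).card with hc
    by_cases hct : c ≤ t - 1
    · omega
    · have hc1 : t ≤ c := by omega
      have hc2 : c ≤ k := hkA ▸ cnt_le_card A m
      have h3 := hcon c hc1
      have hm : 2 * c - t < m := by
        by_contra h
        push_neg at h
        have := cnt_mono A h
        omega
      omega
  have hABT : A ∩ (T ∪ C) = T := by
    have hdAC : Disjoint A C := by
      rw [disjoint_left]; exact fun x hx hxc => (mem_compl.1 (hCA hxc)) hx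
    have hACe : A ∩ C = ∅ := disjoint_iff_inter_eq_empty.1 hdAC
    rw [inter_union_distrib_left, inter_eq_right.2 hTA, hACe, union_empty]
  have := hint A hA (T ∪ C) hBmem
  rw [hABT, hTcard] at this
  omega

/-- Katona's theorem for shifted families. -/
lemma katona_shifted {𝒜 : Finset (Finset (Fin n))} {k t : ℕ} (h𝒜 : Shifted 𝒜)
    (hcard : ∀ A ∈ 𝒜, A.card = k) (hint : ∀ A ∈ 𝒜, ∀ B ∈ 𝒜, t ≤ (A ∩ B).card)
    (ht : 0 < t) : 𝒜.card ≤ (Finset.shadow^[t] 𝒜).card := by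
  classical
  have hex : ∀ A, A ∈ 𝒜 → ∃ j, t ≤ j ∧ j ≤ (A ∩ seg n (2 * j - t)).card :=
    fun A hA => exists_good_j h𝒜 hcard hint ht hA
  set J : Finset (Fin n) → ℕ := fun A =>
    if h : ∃ j, t ≤ j ∧ j ≤ (A ∩ seg n (2 * j - t)).card then Nat.find h else 0 with hJdef
  have hJ : ∀ (A) (hA : A ∈ 𝒜), J A = Nat.find (hex A hA) := fun A hA => by
    rw [hJdef]
    exact dif_pos (hex A hA)
  have hspec : ∀ (A) (hA : A ∈ 𝒜), t ≤ J A ∧ J A ≤ (A ∩ seg n (2 * J A - t)).card :=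
    fun A hA => by rw [hJ A hA]; exact Nat.find_spec (hex A hA)
  have hmin : ∀ (A) (hA : A ∈ 𝒜) (j' : ℕ), j' < J A →
      ¬(t ≤ j' ∧ j' ≤ (A ∩ seg n (2 * j' - t)).card) := fun A hA j' hj' =>
    Nat.find_min (hex A hA) (by rwa [← hJ A hA])
  -- basic facts about J A
  have hfacts : ∀ (A) (hA : A ∈ 𝒜), (A ∩ seg n (2 * J A - t)).card = J A
      ∧ J A ≤ k ∧ 2 * J A - t ≤ n := by
    intro A hA
    obtain ⟨h1, h2⟩ := hspec A hA
    have hJk : J A ≤ k := by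
      have := cnt_le_card A (2 * J A - t)
      rw [hcard A hA] at this
      omega
    by_cases hJt : J A = t
    · have h3 := cnt_le A (2 * J A - t)
      have h4 : 2 * J A - t = t := by omega
      refine ⟨by omega, hJk, by omega⟩
    · have h5 := hmin A hA (J A - 1) (by omega)
      push_neg at h5
      have h6 := h5 (by omega)
      have e1 : 2 * (J A - 1) - t = 2 * J A - t - 2 := by omega
      rw [e1] at h6
      have s1 := cnt_succ_le A (2 * J A - t - 2)
      have s2 := cnt_succ_le A (2 * J A - t - 2 + 1)
      have e2 : 2 * J A - t - 2 + 1 + 1 = 2 * J A - t := by omega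
      rw [e2] at s2
      have hcnt : (A ∩ seg n (2 * J A - t)).card = J A := by omega
      have hbd := card_le_cnt_add A (2 * J A - t - 2)
      rw [hcard A hA] at hbd
      exact ⟨hcnt, hJk, by omega⟩
  -- the injection
  set f : Finset (Fin n) → Finset (Fin n) := fun A => A ∆ seg n (2 * J A - t) with hfdef
  -- membership of f A in the iterated shadow
  have hmem : ∀ A ∈ 𝒜, f A ∈ Finset.shadow^[t] 𝒜 := by
    intro A hA
    obtain ⟨hJt, -⟩ := hspec A hA
    obtain ⟨hcnt, hJk, hJn⟩ := hfacts A hA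
    set j := J A with hj
    set S := seg n (2 * j - t) with hS
    have hScard : S.card = 2 * j - t := by
      rw [hS, card_seg]; omega
    obtain ⟨T, hTsub, hTcard, hTcnt⟩ := exists_initial (A ∩ S) t (by rw [hcnt]; exact hJt)
    have hdisjT : Disjoint (A ∆ S) T := by
      rw [disjoint_right]
      intro x hx
      have hx' := hTsub hx
      rw [mem_inter] at hx'
      rw [mem_symmDiff]
      push_neg
      exact ⟨fun _ => hx'.2, fun _ => hx'.1⟩
    have hsd : A ∆ S = (A \ S) ∪ (S \ A) := by
      rw [symmDiff_def, sup_eq_union]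
    have hcard1 : (A \ S).card = k - j := by
      have := card_inter_add_card_sdiff A S
      rw [hcard A hA] at this
      omega
    have hcard2 : (S \ A).card = 2 * j - t - j := by
      have := card_inter_add_card_sdiff S A
      rw [hScard, inter_comm] at this
      omega
    have hcardsd : (A ∆ S).card = (k - j) + (2 * j - t - j) := by
      rw [hsd, card_union_of_disjoint (disjoint_sdiff_sdiff), hcard1, hcard2]
    have hA'card : ((A ∆ S) ∪ T).card = k := by
      rw [card_union_of_disjoint hdisjT, hcardsd, hTcard]
      omega
    have hA'mem : (A ∆ S) ∪ T ∈ 𝒜 := by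
      apply mem_of_dominated h𝒜 (∑ x ∈ A, (x : ℕ)) A _ hA le_rfl
        (by rw [hA'card, hcard A hA])
      intro m'
      set s' := min (2 * j - t) m' with hs'
      have hseg : S ∩ seg n m' = seg n s' := by
        ext x
        rw [hS, mem_inter, mem_seg, mem_seg, mem_seg]
        omega
      have hp : (A ∩ S) ∩ seg n m' = A ∩ seg n s' := by
        rw [inter_assoc, hseg]
      set p := (A ∩ seg n s').card with hpdef
      set q := ((A \ S) ∩ seg n m').card with hqdef
      have hpj : p ≤ j := by
        rw [← hcnt, hpdef, ← hp]
        exact card_le_card inter_subset_left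
      have hps' : p ≤ s' := by
        have h := cnt_le A s'
        omega
      have hsplitA : (A ∩ seg n m').card = p + q := by
        have h1 : A ∩ seg n m' = ((A ∩ S) ∩ seg n m') ∪ ((A \ S) ∩ seg n m') := by
          rw [← union_inter_distrib_right, union_comm, sdiff_union_inter]
        rw [h1, card_union_of_disjoint, hp]
        exact Disjoint.mono inter_subset_left inter_subset_left
          (disjoint_left.2 fun x hx hx2 => (mem_sdiff.1 hx2).2 (mem_inter.1 hx).2)
      have hSA : ((S \ A) ∩ seg n m').card = s' - p := by
        have h1 : (S \ A) ∩ seg n m' = (S ∩ seg n m') \ ((A ∩ S) ∩ seg n m') := by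
          ext x
          simp only [mem_inter, mem_sdiff]
          tauto
        have h2 : (A ∩ S) ∩ seg n m' ⊆ S ∩ seg n m' :=
          inter_subset_inter inter_subset_right (subset_refl _)
        rw [h1, card_sdiff_of_subset h2, hseg, card_seg, hp, ← hpdef]
        have hsn : s' ≤ n := by omega
        rw [Nat.min_eq_left hsn]
      have hTc : (T ∩ seg n m').card = min t p := by
        rw [hTcnt m', hp]
      have hclaim : t < p → 2 * p - t ≤ s' := by
        intro htp
        rcases lt_or_eq_of_le hpj with hplt | hpeq
        · have h5 := hmin A hA p (by omega)
          push_neg at h5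
          have h6 := h5 (by omega)
          by_contra hcon2
          push_neg at hcon2
          have := cnt_mono A (show s' ≤ 2 * p - t by omega)
          omega
        · by_contra hcon2
          push_neg at hcon2
          have hjt : t < j := by omega
          have h5 := hmin A hA (j - 1) (by omega)
          push_neg at h5
          have h6 := h5 (by omega)
          have e1 : 2 * (j - 1) - t = 2 * j - t - 2 := by omega
          rw [e1] at h6
          have s1 := cnt_succ_le A (2 * j - t - 2)
          have e2 : 2 * j - t - 2 + 1 = 2 * j - t - 1 := by omega
          rw [e2] at s1
          have s2 := cnt_mono A (show s' ≤ 2 * j - t - 1 by omega)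
          omega
      -- assemble
      have hsplitA' : (((A ∆ S) ∪ T) ∩ seg n m').card = q + (s' - p) + min t p := by
        have h1 : ((A ∆ S) ∪ T) ∩ seg n m' = ((A ∆ S) ∩ seg n m') ∪ (T ∩ seg n m') := by
          rw [← union_inter_distrib_right]
        have h2 : (A ∆ S) ∩ seg n m' = ((A \ S) ∩ seg n m') ∪ ((S \ A) ∩ seg n m') := by
          rw [hsd, ← union_inter_distrib_right]
        rw [h1, card_union_of_disjoint
          (Disjoint.mono inter_subset_left inter_subset_left hdisjT),
          h2, card_union_of_disjoint
          (Disjoint.mono inter_subset_left inter_subset_left disjoint_sdiff_sdiff),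
          hSA, hTc]
      rw [hsplitA, hsplitA']
      rcases le_or_gt p t with h | h
      · omega
      · have := hclaim h
        omega
    rw [mem_shadow_iterate_iff_exists_sdiff]
    refine ⟨(A ∆ S) ∪ T, hA'mem, subset_union_left, ?_⟩
    rw [union_sdiff_left, Finset.sdiff_eq_self_iff_disjoint.2 hdisjT.symm, hTcard]
  -- injectivity of f on 𝒜
  have hinj : ∀ A ∈ 𝒜, ∀ B ∈ 𝒜, f A = f B → A = B := by
    intro A hA B hB hfeq
    have key : ∀ X (hX : X ∈ 𝒜), ∀ Y (hY : Y ∈ 𝒜), f X = f Y → J X ≤ J Y := by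
      intro X hX Y hY hf
      by_contra hlt
      push_neg at hlt
      -- then J Y < J X;  X and Y agree below 2 * J Y - t, so P X (J Y) holds
      have hagree : X ∩ seg n (2 * J Y - t) = Y ∩ seg n (2 * J Y - t) := by
        ext x
        simp only [mem_inter, mem_seg]
        constructor
        · rintro ⟨hx, hxs⟩
          refine ⟨?_, hxs⟩
          by_contra hxY
          have h1 : x ∈ f Y := by
            rw [hfdef, mem_symmDiff]
            exact Or.inr ⟨by rw [mem_seg]; exact hxs, hxY⟩
          rw [← hf, hfdef, mem_symmDiff] at h1
          rcases h1 with ⟨-, h1⟩ | ⟨-, h1⟩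
          · exact h1 (by rw [mem_seg]; omega)
          · exact h1 hx
        · rintro ⟨hx, hxs⟩
          refine ⟨?_, hxs⟩
          by_contra hxX
          have h1 : x ∈ f X := by
            rw [hfdef, mem_symmDiff]
            exact Or.inr ⟨by rw [mem_seg]; omega, hxX⟩
          rw [hf, hfdef, mem_symmDiff] at h1
          rcases h1 with ⟨-, h1⟩ | ⟨-, h1⟩
          · exact h1 (by rw [mem_seg]; exact hxs)
          · exact h1 hx
      have h2 := hmin X hX (J Y) hlt
      push_neg at h2
      have h3 := h2 (hspec Y hY).1
      rw [hagree] at h3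
      have h4 := (hfacts Y hY).1
      omega
    have hJeq : J A = J B := le_antisymm (key A hA B hB hfeq) (key B hB A hA hfeq.symm)
    have : A ∆ seg n (2 * J A - t) = B ∆ seg n (2 * J A - t) := by
      have := hfeq
      rw [hfdef] at this
      simp only at this
      rw [hJeq]
      rw [hJeq] at this
      exact this
    calc A = (A ∆ seg n (2 * J A - t)) ∆ seg n (2 * J A - t) :=
          (symmDiff_symmDiff_cancel_right _ _).symm
      _ = (B ∆ seg n (2 * J A - t)) ∆ seg n (2 * J A - t) := by rw [this]
      _ = B := symmDiff_symmDiff_cancel_right _ _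
  exact card_le_card_of_injOn f hmem (fun A hA B hB h =>
    hinj A (by simpa using hA) B (by simpa using hB) h)

/-! ### Compression step -/

lemma compress_eq_of_fired {i j : Fin n} {A : Finset (Fin n)} (hij : i ≠ j)
    (hi : i ∉ A) (hj : j ∈ A) :
    UV.compress {i} {j} A = insert i (A.erase j) := by
  rw [UV.compress_of_disjoint_of_le (disjoint_singleton_left.2 hi)
    (singleton_subset_iff.2 hj)]
  ext x
  by_cases hx : x = i <;> by_cases hx' : x = j <;>
    simp_all [mem_sdiff, mem_union, mem_insert, mem_erase]

lemma compress_fired {i j : Fin n} {A : Finset (Fin n)}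
    (h : UV.compress {i} {j} A ≠ A) : i ∉ A ∧ j ∈ A := by
  rw [UV.compress] at h
  split_ifs at h with hcond
  · exact ⟨disjoint_singleton_left.1 hcond.1, singleton_subset_iff.1 hcond.2⟩
  · exact absurd rfl h

lemma weight_compression_lt {𝒜 : Finset (Finset (Fin n))} {i j : Fin n} (hij : i < j)
    (hwit : ∃ A ∈ 𝒜, UV.compress {i} {j} A ∉ 𝒜) :
    (∑ A ∈ UV.compression {i} {j} 𝒜, ∑ x ∈ A, (x : ℕ)) < ∑ A ∈ 𝒜, ∑ x ∈ A, (x : ℕ) := by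
  classical
  rw [UV.compression, sum_union UV.compress_disjoint, filter_image,
    sum_image (fun x hx y hy h => UV.compress_injOn (mem_coe.2 hx) (mem_coe.2 hy) h)]
  rw [← sum_filter_add_sum_filter_not 𝒜 (fun a => UV.compress {i} {j} a ∈ 𝒜)
    (fun A => ∑ x ∈ A, (x : ℕ))]
  have hkey : ∀ a ∈ 𝒜.filter (fun a => UV.compress {i} {j} a ∉ 𝒜),
      (∑ x ∈ UV.compress {i} {j} a, (x : ℕ)) < ∑ x ∈ a, (x : ℕ) := by
    intro a ha
    rw [mem_filter] at ha
    have hne : UV.compress {i} {j} a ≠ a := fun h => ha.2 (h.symm ▸ ha.1)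
    obtain ⟨hi, hj⟩ := compress_fired hne
    rw [compress_eq_of_fired (ne_of_lt hij) hi hj]
    rw [sum_insert (fun h => hi (mem_of_mem_erase h))]
    have h1 : (∑ x ∈ a.erase j, (x : ℕ)) + (j : ℕ) = ∑ x ∈ a, (x : ℕ) :=
      sum_erase_add a _ hj
    have h2 : (i : ℕ) < (j : ℕ) := hij
    omega
  have hne : (𝒜.filter (fun a => UV.compress {i} {j} a ∉ 𝒜)).Nonempty := by
    obtain ⟨A, hA, hA'⟩ := hwit
    exact ⟨A, mem_filter.2 ⟨hA, hA'⟩⟩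
  have hlt := sum_lt_sum_of_nonempty hne hkey
  have hsame : 𝒜.filter (fun a => ¬ UV.compress {i} {j} a ∈ 𝒜)
      = 𝒜.filter (fun a => UV.compress {i} {j} a ∉ 𝒜) := rfl
  omega

lemma compression_sized {𝒜 : Finset (Finset (Fin n))} {i j : Fin n} {k : ℕ}
    (hcard : ∀ A ∈ 𝒜, A.card = k) :
    ∀ A ∈ UV.compression {i} {j} 𝒜, A.card = k := by
  classical
  intro A hA
  have h : (𝒜 : Set (Finset (Fin n))).Sized k := fun B hB => hcard B hB
  exact h.uvCompression (by simp) hA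

lemma compression_intersecting {𝒜 : Finset (Finset (Fin n))} {i j : Fin n} (hij : i ≠ j)
    {t : ℕ} (hint : ∀ A ∈ 𝒜, ∀ B ∈ 𝒜, t ≤ (A ∩ B).card) :
    ∀ X ∈ UV.compression {i} {j} 𝒜, ∀ Y ∈ UV.compression {i} {j} 𝒜, t ≤ (X ∩ Y).card := by
  classical
  -- the asymmetric case : X survives, Y = compress of b is moved
  have hasym : ∀ X, X ∈ 𝒜 → UV.compress {i} {j} X ∈ 𝒜 → ∀ b ∈ 𝒜, i ∉ b → j ∈ b →
      t ≤ (X ∩ insert i (b.erase j)).card := by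
    intro X hX hcX b hb hib hjb
    by_cases hiX : i ∈ X
    · have h1 := hint X hX b hb
      have h2 : insert i ((X ∩ b).erase j) ⊆ X ∩ insert i (b.erase j) := by
        intro x hx
        rw [mem_insert] at hx
        rcases hx with rfl | hx
        · exact mem_inter.2 ⟨hiX, mem_insert_self _ _⟩
        · rw [mem_erase, mem_inter] at hx
          exact mem_inter.2 ⟨hx.2.1, mem_insert_of_mem (mem_erase.2 ⟨hx.1, hx.2.2⟩)⟩
      have h3 := card_le_card h2
      rw [card_insert_of_notMem (fun h => hib (mem_inter.1 (mem_of_mem_erase h)).2)] at h3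
      by_cases hjXb : j ∈ X ∩ b
      · rw [card_erase_of_mem hjXb] at h3
        omega
      · rw [erase_eq_of_notMem hjXb] at h3
        omega
    · by_cases hjX : j ∈ X
      · -- i ∉ X, j ∈ X : use that the compression of X is in 𝒜
        rw [compress_eq_of_fired hij hiX hjX] at hcX
        have h1 := hint _ hcX b hb
        have h2 : insert i (X.erase j) ∩ b ⊆ X ∩ insert i (b.erase j) := by
          intro x hx
          rw [mem_inter, mem_insert, mem_erase] at hx
          rcases hx with ⟨rfl | ⟨hxj, hxX⟩, hxb⟩
          · exact absurd hxb hib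
          · exact mem_inter.2 ⟨hxX, mem_insert_of_mem (mem_erase.2 ⟨hxj, hxb⟩)⟩
        exact h1.trans (card_le_card h2)
      · -- i ∉ X, j ∉ X
        have h1 := hint X hX b hb
        have h2 : X ∩ b ⊆ X ∩ insert i (b.erase j) := by
          intro x hx
          rw [mem_inter] at hx
          exact mem_inter.2 ⟨hx.1, mem_insert_of_mem (mem_erase.2
            ⟨fun h => hjX (h ▸ hx.1), hx.2⟩)⟩
        exact h1.trans (card_le_card h2)
  intro X hX Y hY
  rw [UV.mem_compression] at hX hY
  rcases hX with ⟨hX, hcX⟩ | ⟨hXn, a, ha, rfl⟩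
  · rcases hY with ⟨hY, hcY⟩ | ⟨hYn, b, hb, rfl⟩
    · exact hint X hX Y hY
    · have hne : UV.compress {i} {j} b ≠ b := fun h => hYn (h.symm ▸ hb)
      obtain ⟨hib, hjb⟩ := compress_fired hne
      rw [compress_eq_of_fired hij hib hjb]
      exact hasym X hX hcX b hb hib hjb
  · have hnea : UV.compress {i} {j} a ≠ a := fun h => hXn (h.symm ▸ ha)
    obtain ⟨hia, hja⟩ := compress_fired hnea
    rcases hY with ⟨hY, hcY⟩ | ⟨hYn, b, hb, rfl⟩
    · rw [inter_comm, compress_eq_of_fired hij hia hja]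
      exact hasym Y hY hcY a ha hia hja
    · have hneb : UV.compress {i} {j} b ≠ b := fun h => hYn (h.symm ▸ hb)
      obtain ⟨hib, hjb⟩ := compress_fired hneb
      rw [compress_eq_of_fired hij hia hja, compress_eq_of_fired hij hib hjb]
      have h1 := hint a ha b hb
      have h2 : insert i ((a ∩ b).erase j) ⊆
          insert i (a.erase j) ∩ insert i (b.erase j) := by
        intro x hx
        rw [mem_insert] at hx
        rcases hx with rfl | hx
        · exact mem_inter.2 ⟨mem_insert_self _ _, mem_insert_self _ _⟩
        · rw [mem_erase, mem_inter] at hx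
          exact mem_inter.2 ⟨mem_insert_of_mem (mem_erase.2 ⟨hx.1, hx.2.1⟩),
            mem_insert_of_mem (mem_erase.2 ⟨hx.1, hx.2.2⟩)⟩
      have h3 := card_le_card h2
      rw [card_insert_of_notMem (fun h => hia (mem_inter.1 (mem_of_mem_erase h)).1),
        card_erase_of_mem (mem_inter.2 ⟨hja, hjb⟩)] at h3
      omega

lemma card_shadow_iterate_compression_le {i j : Fin n} :
    ∀ (s : ℕ) (𝒜 : Finset (Finset (Fin n))),
      (Finset.shadow^[s] (UV.compression {i} {j} 𝒜)).card ≤ (Finset.shadow^[s] 𝒜).card := by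
  classical
  intro s
  induction s with
  | zero => intro 𝒜; simp [UV.card_compression]
  | succ s ih =>
    intro 𝒜
    rw [Function.iterate_succ_apply, Function.iterate_succ_apply]
    have h1 : ∂ (UV.compression {i} {j} 𝒜) ⊆ UV.compression {i} {j} (∂ 𝒜) := by
      apply UV.shadow_compression_subset_compression_shadow
      intro x hx
      rw [mem_singleton] at hx
      subst hx
      exact ⟨j, mem_singleton_self j, by
        rw [erase_singleton, erase_singleton]; exact UV.isCompressed_self ∅ _⟩
    calc (Finset.shadow^[s] (∂ (UV.compression {i} {j} 𝒜))).card
        ≤ (Finset.shadow^[s] (UV.compression {i} {j} (∂ 𝒜))).card :=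
          card_le_card (shadow_monotone.iterate s h1)
      _ ≤ (Finset.shadow^[s] (∂ 𝒜)).card := ih (∂ 𝒜)

lemma katona_aux {k t : ℕ} (ht : 0 < t) :
    ∀ (w : ℕ) (𝒜 : Finset (Finset (Fin n))), (∑ A ∈ 𝒜, ∑ x ∈ A, (x : ℕ)) ≤ w →
    (∀ A ∈ 𝒜, A.card = k) → (∀ A ∈ 𝒜, ∀ B ∈ 𝒜, t ≤ (A ∩ B).card) →
    𝒜.card ≤ (Finset.shadow^[t] 𝒜).card := by
  classical
  have hwitness : ∀ 𝒜 : Finset (Finset (Fin n)), ¬ Shifted 𝒜 →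
      ∃ i j : Fin n, i < j ∧ ∃ A ∈ 𝒜, UV.compress {i} {j} A ∉ 𝒜 := by
    intro 𝒜 hsh
    rw [Shifted] at hsh
    push_neg at hsh
    obtain ⟨A, hA, b, hb, a, hab, haA, hnot⟩ := hsh
    exact ⟨a, b, hab, A, hA, by
      rwa [compress_eq_of_fired (ne_of_lt hab) haA hb]⟩
  intro w
  induction w with
  | zero =>
    intro 𝒜 hw hcard hint
    by_cases hsh : Shifted 𝒜
    · exact katona_shifted hsh hcard hint ht
    · exfalso
      obtain ⟨i, j, hij, hwit⟩ := hwitness 𝒜 hsh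
      have := weight_compression_lt hij hwit
      omega
  | succ w ih =>
    intro 𝒜 hw hcard hint
    by_cases hsh : Shifted 𝒜
    · exact katona_shifted hsh hcard hint ht
    · obtain ⟨i, j, hij, hwit⟩ := hwitness 𝒜 hsh
      have hlt := weight_compression_lt hij hwit
      have h1 := ih (UV.compression {i} {j} 𝒜) (by omega)
        (compression_sized hcard) (compression_intersecting (ne_of_lt hij) hint)
      calc 𝒜.card = (UV.compression {i} {j} 𝒜).card := (UV.card_compression _ _ _).symm
        _ ≤ (Finset.shadow^[t] (UV.compression {i} {j} 𝒜)).card := h1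
        _ ≤ (Finset.shadow^[t] 𝒜).card := card_shadow_iterate_compression_le t 𝒜

end KatonaAux

/-- (Katona) If `𝒜` is a `t`-intersecting family of `k`-element subsets of `[n]`, with
`k, t > 0`, then the `t`-fold iterated shadow of `𝒜` is at least as large as `𝒜`. -/
theorem stmt7 (n k t : ℕ) (hk : 0 < k) (ht : 0 < t) (𝒜 : Finset (Finset (Fin n)))
    (hcard : ∀ A ∈ 𝒜, A.card = k)
    (hint : ∀ A ∈ 𝒜, ∀ B ∈ 𝒜, t ≤ (A ∩ B).card) :
    𝒜.card ≤ (Finset.shadow^[t] 𝒜).card :=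
  KatonaAux.katona_aux ht (∑ A ∈ 𝒜, ∑ x ∈ A, (x : ℕ)) 𝒜 le_rfl hcard hint
end

section
/- If Conjecture B holds for Q_n (every 2-colouring of E(Q_n) admits a path between some pair of antipodal vertices that changes colour at most once), then Norine's conjecture holds for Q_n: every antipodal 2-colouring of E(Q_n) contains a monochromatic path between two antipodal vertices. -/
open SimpleGraph Finset
open scoped symmDiff

/-- The antipodal vertex of `x` in `Q n`: flip every coordinate. -/
def antip {n : ℕ} (x : Fin n → Bool) : Fin n → Bool := fun i => !x i

/-- A 2-colouring of the edges of `Q n` is antipodal if every pair of antipodal edges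
receives different colours. -/
def IsAntipodalColouring (n : ℕ) (c : Sym2 (Fin n → Bool) → Bool) : Prop :=
  ∀ x y : Fin n → Bool, (Q n).Adj x y → c s(x, y) ≠ c s(antip x, antip y)

/-- A walk changes colour at most once under `c`: its edge list splits as a block of one
colour followed by a (possibly empty) block of the other colour. -/
def ChangesAtMostOnce {n : ℕ} (c : Sym2 (Fin n → Bool) → Bool) {u v : Fin n → Bool}
    (p : (Q n).Walk u v) : Prop :=
  ∃ (l₁ l₂ : List (Sym2 (Fin n → Bool))) (b : Bool),
    p.edges = l₁ ++ l₂ ∧ (∀ e ∈ l₁, c e = b) ∧ (∀ e ∈ l₂, c e = !b)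

/-- A walk is monochromatic under `c`. -/
def Mono {n : ℕ} (c : Sym2 (Fin n → Bool) → Bool) {u v : Fin n → Bool}
    (p : (Q n).Walk u v) : Prop :=
  ∃ b : Bool, ∀ e ∈ p.edges, c e = b

lemma antip_antip {n : ℕ} (x : Fin n → Bool) : antip (antip x) = x := by
  funext i; simp [antip]

/-- `antip` as a graph homomorphism of `Q n`. -/
def antipHom (n : ℕ) : Q n →g Q n where
  toFun := antip
  map_rel' := by
    intro x y h
    have : (Finset.univ.filter fun i => antip x i ≠ antip y i)
        = (Finset.univ.filter fun i => x i ≠ y i) := by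
      apply Finset.filter_congr
      intro i _
      simp [antip]
    simpa [Q, hammingDist, this] using h

lemma walk_split {V : Type*} {G : SimpleGraph V} {u v : V} (p : G.Walk u v)
    (l₁ l₂ : List (Sym2 V)) (h : p.edges = l₁ ++ l₂) :
    ∃ (w : V) (p₁ : G.Walk u w) (p₂ : G.Walk w v),
      p₁.edges = l₁ ∧ p₂.edges = l₂ := by
  induction p generalizing l₁ with
  | nil =>
    simp only [SimpleGraph.Walk.edges_nil] at h
    rcases List.append_eq_nil_iff.mp h.symm with ⟨h1, h2⟩
    exact ⟨_, .nil, .nil, by simp [h1], by simp [h2]⟩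
  | @cons a b c hab q ih =>
    cases l₁ with
    | nil =>
      exact ⟨a, .nil, .cons hab q, by simp, by simpa using h⟩
    | cons e t =>
      simp only [SimpleGraph.Walk.edges_cons, List.cons_append, List.cons.injEq] at h
      obtain ⟨w, p₁, p₂, h1, h2⟩ := ih t h.2
      exact ⟨w, .cons hab p₁, p₂, by simp [h1, h.1], h2⟩

/-- If Conjecture B holds for `Q n` (every 2-colouring of `E(Q n)` admits a path between
some pair of antipodal vertices that changes colour at most once), then Norine's
conjecture holds for `Q n`: every antipodal 2-colouring of `E(Q n)` contains a
monochromatic path between two antipodal vertices. -/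
theorem stmt13 (n : ℕ) (hn : 2 ≤ n)
    (hB : ∀ c : Sym2 (Fin n → Bool) → Bool,
      ∃ (u : Fin n → Bool) (p : (Q n).Walk u (antip u)), p.IsPath ∧ ChangesAtMostOnce c p) :
    ∀ c : Sym2 (Fin n → Bool) → Bool, IsAntipodalColouring n c →
      ∃ (u : Fin n → Bool) (p : (Q n).Walk u (antip u)), p.IsPath ∧ Mono c p := by
  intro c hc
  obtain ⟨u, p, hp, l₁, l₂, b, hsplit, h1, h2⟩ := hB c
  obtain ⟨w, p₁, p₂, he1, he2⟩ := walk_split p l₁ l₂ hsplit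
  -- colour flip lemma for mapped edges
  have hflip : ∀ {x y : Fin n → Bool} (e : Sym2 (Fin n → Bool)),
      ∀ (q : (Q n).Walk x y), e ∈ (q.map (antipHom n)).edges →
      (∀ e' ∈ q.edges, c e' = !b) → c e = b := by
    intro x y e q he hq
    rw [SimpleGraph.Walk.edges_map, List.mem_map] at he
    obtain ⟨e', he', rfl⟩ := he
    have hadj := q.edges_subset_edgeSet he'
    induction e' with
    | h a a' =>
      have h := hc a a' hadj
      have hca := hq _ he'
      rw [hca] at h
      have : Sym2.map (antipHom n) s(a, a') = s(antip a, antip a') := rfl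
      rw [this]
      revert h
      cases c s(antip a, antip a') <;> cases b <;> simp
  -- the antipodal image of p₂, from antip w to u
  let pA : (Q n).Walk (antip w) u :=
    (p₂.map (antipHom n)).copy rfl (antip_antip u)
  -- combined walk from antip w to antip (antip w) = w
  let q : (Q n).Walk (antip w) (antip (antip w)) :=
    (pA.append p₁).copy rfl (antip_antip w).symm
  refine ⟨antip w, q.bypass, q.bypass_isPath, b, ?_⟩
  intro e he
  have he' : e ∈ q.edges := q.edges_bypass_subset he
  simp only [q, pA, SimpleGraph.Walk.edges_copy, SimpleGraph.Walk.edges_append,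
    List.mem_append] at he'
  rcases he' with h | h
  · exact hflip e p₂ (Eq.mp (congrArg (e ∈ ·) (SimpleGraph.Walk.edges_copy (p₂.map (antipHom n)) (rfl : antipHom n w = antip w) (antip_antip u))) h) (fun e' he' => h2 e' (he2 ▸ he'))
  · exact h1 e (he1 ▸ h)
end

section
/- Let G be a subgraph of Q_n, let e = xy be an edge of G whose coordinate direction is maximal among all edges of G, and let G' = G - e. Then any increasing geodesic in G' ending at x (or at y) does not use the direction of e, and consequently S(G) ≥ S(G') + 2, where S(H) = Σ_{v ∈ V(H)} |L_H(v)| and |L_H(v)| is the maximum length of an increasing geodesic in H ending at v. -/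
open SimpleGraph Finset
open scoped symmDiff

section Aux
variable {n : ℕ}

lemma bool_eq_of_ne {p q r : Bool} (h1 : p ≠ r) (h2 : q ≠ r) : p = q := by
  revert h1 h2; cases p <;> cases q <;> cases r <;> decide

lemma Qedge {a b : Fin n → Bool} (h : (Q n).Adj a b) :
    ∃ j : Fin n, dir a b = (j : ℕ) ∧ a j ≠ b j ∧ ∀ k, k ≠ j → a k = b k := by
  have h' : (Finset.univ.filter fun i => a i ≠ b i).card = 1 := by
    have h2 : hammingDist a b = 1 := h
    unfold hammingDist at h2
    convert h2
  obtain ⟨j, hj⟩ := Finset.card_eq_one.mp h'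
  refine ⟨j, ?_, ?_, ?_⟩
  · rw [dir, hj, Finset.sup_singleton]
  · have : j ∈ Finset.univ.filter fun i => a i ≠ b i := hj ▸ Finset.mem_singleton_self j
    simpa using this
  · intro k hk
    by_contra hne
    have : k ∈ Finset.univ.filter fun i => a i ≠ b i := by simpa using hne
    rw [hj, Finset.mem_singleton] at this
    exact hk this

lemma dir_comm_s17 (a b : Fin n → Bool) : dir a b = dir b a := by
  unfold dir; congr 1; ext k; simp [ne_comm]

lemma edge_unique {a b z : Fin n → Bool} (ha : (Q n).Adj a z) (hb : (Q n).Adj b z)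
    (hd : dir a z = dir b z) : a = b := by
  obtain ⟨j, hj1, hj2, hj3⟩ := Qedge ha
  obtain ⟨j', hj1', hj2', hj3'⟩ := Qedge hb
  have hjj : j = j' := Fin.ext (by omega)
  subst hjj
  funext k
  by_cases hk : k = j
  · subst hk; exact bool_eq_of_ne hj2 hj2'
  · rw [hj3 k hk, hj3' k hk]

lemma dart_adj_of_le {u v : Fin n → Bool} {p : (Q n).Walk u v} {H : (Q n).Subgraph}
    (hle : p.toSubgraph ≤ H) {d : (Q n).Dart} (hd : d ∈ p.darts) : H.Adj d.fst d.snd := by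
  have he : d.edge ∈ p.edges := List.mem_map_of_mem hd
  have h2 : s(d.fst, d.snd) ∈ p.toSubgraph.edgeSet := (p.mem_edges_toSubgraph).mpr he
  exact hle.2 (SimpleGraph.Subgraph.mem_edgeSet.mp h2)

lemma mem_dirs_of_ne {u v : Fin n → Bool} (p : (Q n).Walk u v) (j : Fin n)
    (h : u j ≠ v j) : (j : ℕ) ∈ dirs p := by
  induction p with
  | nil => exact absurd rfl h
  | @cons a b c hadj q ih =>
    have hdirs : dirs (Walk.cons hadj q) = dir a b :: dirs q := rfl
    by_cases hb : a j = b j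
    · rw [hdirs]
      exact List.mem_cons_of_mem _ (ih (fun hbc => h (hb.trans hbc)))
    · obtain ⟨j', h1, h2, h3⟩ := Qedge hadj
      have hjj : j = j' := by_contra fun hne => hb (h3 j hne)
      rw [hdirs, hjj, ← h1]
      exact List.mem_cons_self

end Aux

section Main
variable {n : ℕ} {G : (Q n).Subgraph} {x y : Fin n → Bool}

lemma no_max_dir (hxy : G.Adj x y)
    (hmax : ∀ a b : Fin n → Bool, G.Adj a b → dir a b ≤ dir x y) :
    ∀ (w z : Fin n → Bool), (z = x ∨ z = y) → ∀ p : (Q n).Walk w z,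
      p.toSubgraph ≤ G.deleteEdges {s(x, y)} → IsIncGeodesic p →
      ∀ dd ∈ p.darts, dir dd.fst dd.snd ≠ dir x y := by
  intro w z hz p
  induction p with
  | nil => intro _ _ dd hdd; simp [Walk.darts] at hdd
  | @cons a b z hadj q ih =>
    intro hle hinc dd hdd
    have hle' := hle
    rw [show (Walk.cons hadj q).toSubgraph = (Q n).subgraphOfAdj hadj ⊔ q.toSubgraph from rfl,
      sup_le_iff] at hle'
    obtain ⟨hle1, hle2⟩ := hle'
    have hG'ab : (G.deleteEdges {s(x, y)}).Adj a b := hle1.2 (by simp)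
    have hGab : G.Adj a b := (Subgraph.deleteEdges_le _).2 hG'ab
    have hchain : (dir a b :: dirs q).Chain' (· < ·) := hinc.2
    have qinc : IsIncGeodesic q := ⟨hinc.1.of_cons, hchain.tail⟩
    rcases List.mem_cons.mp hdd with hdd1 | hdd2
    · subst hdd1
      simp only
      intro heq
      cases q with
      | nil =>
        have hQxy : (Q n).Adj x y := hxy.adj_sub
        rcases hz with hzx | hzy
        · have hay : a = y := edge_unique hadj (hzx ▸ hQxy.symm)
            (heq.trans (by rw [hzx, dir_comm_s17]))
          apply (Subgraph.deleteEdges_adj _ _ _).mp hG'ab |>.2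
          rw [hay, hzx, Sym2.eq_swap]
          rfl
        · have hax : a = x := edge_unique hadj (hzy ▸ hQxy)
            (heq.trans (by rw [hzy]))
          apply (Subgraph.deleteEdges_adj _ _ _).mp hG'ab |>.2
          rw [hax, hzy]
          rfl
      | @cons b c z hadj' q' =>
        have hlt : dir a b < dir b c := (List.isChain_cons_cons.mp hchain).1
        have hle3 : (Q n).subgraphOfAdj hadj' ⊔ q'.toSubgraph ≤ G.deleteEdges {s(x, y)} :=
          hle2
        have hGbc : G.Adj b c :=
          (Subgraph.deleteEdges_le _).2 ((le_sup_left.trans hle3).2 (by simp))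
        have := hmax b c hGbc
        omega
    · exact ih hz hle2 qinc dd hdd2

end Main

section MaxInc
variable {n : ℕ}

lemma zero_mem_spec {H : (Q n).Subgraph} {v : Fin n → Bool} (hv : v ∈ H.verts) :
    (0:ℕ) ∈ {l | ∃ u, ∃ p : (Q n).Walk u v, p.toSubgraph ≤ H ∧ IsIncGeodesic p ∧ p.length = l} := by
  refine ⟨v, Walk.nil, ?_, ⟨Walk.IsPath.nil, List.isChain_nil⟩, rfl⟩
  rw [show (Walk.nil : (Q n).Walk v v).toSubgraph = (Q n).singletonSubgraph v from rfl,
    singletonSubgraph_le_iff]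
  exact hv

lemma bdd_spec {H : (Q n).Subgraph} {v : Fin n → Bool} :
    BddAbove {l | ∃ u, ∃ p : (Q n).Walk u v, p.toSubgraph ≤ H ∧ IsIncGeodesic p ∧ p.length = l} := by
  refine ⟨Fintype.card (Fin n → Bool), fun l hl => ?_⟩
  obtain ⟨u, p, _, hp, hlen⟩ := hl
  exact hlen ▸ hp.1.length_lt.le

lemma maxInc_mem {H : (Q n).Subgraph} {v : Fin n → Bool} (hv : v ∈ H.verts) :
    maxInc H v ∈ {l | ∃ u, ∃ p : (Q n).Walk u v, p.toSubgraph ≤ H ∧ IsIncGeodesic p ∧ p.length = l} :=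
  Nat.sSup_mem ⟨0, zero_mem_spec hv⟩ bdd_spec

lemma le_maxInc {H : (Q n).Subgraph} {v : Fin n → Bool} {l : ℕ}
    (hl : l ∈ {l | ∃ u, ∃ p : (Q n).Walk u v, p.toSubgraph ≤ H ∧ IsIncGeodesic p ∧ p.length = l}) :
    l ≤ maxInc H v :=
  le_csSup bdd_spec hl

lemma maxInc_mono {H H' : (Q n).Subgraph} (h : H ≤ H') (v : Fin n → Bool) :
    maxInc H v ≤ maxInc H' v := by
  by_cases hne : {l | ∃ u, ∃ p : (Q n).Walk u v,
      p.toSubgraph ≤ H ∧ IsIncGeodesic p ∧ p.length = l}.Nonempty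
  · exact csSup_le_csSup bdd_spec hne
      (fun l ⟨u, p, hp1, hp2, hp3⟩ => ⟨u, p, hp1.trans h, hp2, hp3⟩)
  · rw [maxInc, Set.not_nonempty_iff_eq_empty.mp hne, csSup_empty]
    exact Nat.zero_le _

end MaxInc

section Ext
variable {n : ℕ} {G : (Q n).Subgraph} {x y : Fin n → Bool}

lemma extend (hxy : G.Adj x y)
    (hmax : ∀ a b : Fin n → Bool, G.Adj a b → dir a b ≤ dir x y) :
    maxInc (G.deleteEdges {s(x, y)}) y + 1 ≤ maxInc G x := by
  have hyv' : y ∈ (G.deleteEdges {s(x, y)}).verts := by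
    rw [Subgraph.deleteEdges_verts]; exact hxy.snd_mem
  obtain ⟨u, q, hq1, hq2, hq3⟩ := maxInc_mem hyv'
  have hQxy : (Q n).Adj x y := hxy.adj_sub
  have hlt : ∀ d ∈ q.darts, dir d.fst d.snd < dir x y := fun d hd =>
    lt_of_le_of_ne (hmax _ _ ((Subgraph.deleteEdges_le _).2 (dart_adj_of_le hq1 hd)))
      (no_max_dir hxy hmax u y (Or.inr rfl) q hq1 hq2 d hd)
  have hxs : x ∉ q.support := by
    intro hx
    obtain ⟨q1, q2, hq⟩ := Walk.mem_support_iff_exists_append.mp hx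
    obtain ⟨j, hj1, hj2, hj3⟩ := Qedge hQxy
    have hmem : (j:ℕ) ∈ dirs q2 := mem_dirs_of_ne q2 j hj2
    rw [dirs] at hmem
    obtain ⟨d, hd, hdd⟩ := List.mem_map.mp hmem
    have hdq : d ∈ q.darts := by
      rw [hq, Walk.darts_append]; exact List.mem_append_right _ hd
    have := hlt d hdq
    omega
  set p := q.concat hQxy.symm with hp
  have hdarts : p.darts = q.darts ++ [⟨(y, x), hQxy.symm⟩] := by
    rw [hp, Walk.darts_concat, List.concat_eq_append]
  have hdirs : dirs p = dirs q ++ [dir y x] := by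
    rw [dirs, hdarts, List.map_append]; rfl
  have hpath : p.IsPath := by
    rw [hp, ← Walk.isPath_reverse_iff, Walk.reverse_concat, Walk.cons_isPath_iff]
    exact ⟨hq2.1.reverse, by simpa [Walk.support_reverse] using hxs⟩
  have hchain : (dirs p).Chain' (· < ·) := by
    rw [hdirs]
    apply List.IsChain.append hq2.2 (List.isChain_singleton _)
    intro a ha b hb
    obtain ⟨hne, rfl⟩ := List.mem_getLast?_eq_getLast ha
    have hmem : (dirs q).getLast hne ∈ q.darts.map (fun d => dir d.fst d.snd) :=
      List.getLast_mem hne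
    obtain ⟨d, hd, hdd⟩ := List.mem_map.mp hmem
    have h1 := hlt d hd
    have hb' : b = dir y x := by simpa using hb.symm
    rw [hb', ← dir_comm_s17, ← hdd]
    exact h1
  have hsub : p.toSubgraph ≤ G := by
    rw [hp, Walk.concat_eq_append, Walk.toSubgraph_append]
    apply sup_le (hq1.trans (Subgraph.deleteEdges_le _))
    rw [show (Walk.cons hQxy.symm Walk.nil).toSubgraph
        = (Q n).subgraphOfAdj hQxy.symm ⊔ (Q n).singletonSubgraph x from rfl]
    exact sup_le (subgraphOfAdj_le_of_adj G hxy.symm)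
      ((singletonSubgraph_le_iff _ _).mpr hxy.fst_mem)
  have hlen : p.length = maxInc (G.deleteEdges {s(x, y)}) y + 1 := by
    rw [hp, Walk.length_concat, hq3]
  exact hlen ▸ le_maxInc ⟨u, p, hsub, ⟨hpath, hchain⟩, rfl⟩

end Ext

/-- Let `e = xy` be an edge of a subgraph `G` of `Q n` of maximal coordinate direction,
and let `G' = G - e`.  Then no increasing geodesic in `G'` ending at `x` or at `y` uses
the direction of `e`, and consequently `S(G) ≥ S(G') + 2`, where
`S(H) = ∑_{v ∈ V(H)} |L_H(v)|` and `|L_H(v)|` is the maximum length of an increasing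
geodesic in `H` ending at `v`. -/
theorem stmt17 (n : ℕ) (G : (Q n).Subgraph) (x y : Fin n → Bool) (hxy : G.Adj x y)
    (hmax : ∀ a b : Fin n → Bool, G.Adj a b → dir a b ≤ dir x y) :
    (∀ (w z : Fin n → Bool), (z = x ∨ z = y) → ∀ p : (Q n).Walk w z,
      p.toSubgraph ≤ G.deleteEdges {s(x, y)} → IsIncGeodesic p →
      ∀ dd ∈ p.darts, dir dd.fst dd.snd ≠ dir x y) ∧
    (∑ᶠ v ∈ (G.deleteEdges {s(x, y)}).verts, maxInc (G.deleteEdges {s(x, y)}) v) + 2 ≤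
      ∑ᶠ v ∈ G.verts, maxInc G v := by
  have hP1 := no_max_dir hxy hmax
  refine ⟨hP1, ?_⟩
  have hxny : x ≠ y := hxy.ne
  have hxv : x ∈ G.verts := hxy.fst_mem
  have hyv : y ∈ G.verts := hxy.snd_mem
  have hE1 : maxInc (G.deleteEdges {s(x, y)}) y + 1 ≤ maxInc G x := extend hxy hmax
  have hE2 : maxInc (G.deleteEdges {s(x, y)}) x + 1 ≤ maxInc G y := by
    have h := extend hxy.symm (fun a b hab => (hmax a b hab).trans_eq (dir_comm_s17 x y))
    rwa [show s(y, x) = s(x, y) from Sym2.eq_swap] at h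
  have hfin : G.verts.Finite := Set.toFinite _
  have hG'verts : (G.deleteEdges {s(x, y)}).verts = G.verts := rfl
  rw [hG'verts, ← hfin.coe_toFinset, finsum_mem_coe_finset, finsum_mem_coe_finset]
  set s := hfin.toFinset with hs
  have hsub : ({x, y} : Finset (Fin n → Bool)) ⊆ s := by
    intro v hv
    rcases Finset.mem_insert.mp hv with rfl | hv
    · rw [hs, Set.Finite.mem_toFinset]; exact hxv
    · rw [Finset.mem_singleton] at hv; subst hv
      rw [hs, Set.Finite.mem_toFinset]; exact hyv
  rw [← Finset.sum_sdiff hsub, ← Finset.sum_sdiff hsub,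
    Finset.sum_pair hxny, Finset.sum_pair hxny]
  have hmono : ∑ v ∈ s \ {x, y}, maxInc (G.deleteEdges {s(x, y)}) v
      ≤ ∑ v ∈ s \ {x, y}, maxInc G v :=
    Finset.sum_le_sum fun v _ => maxInc_mono (Subgraph.deleteEdges_le _) v
  omega
end
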